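/- arXiv:2505.15382 — 8 statements merged into one kernel-verified Lean document; each statement's English description precedes it below -/
import Mathlib

section
/- Under assumptions (1)–(4) and assumption (5b) — there exists t_ρ ∈ [0,1] with F_low(t_ρ) > 0 — if λ_ρ ∈ ℝ and u_ρ ∈ C([0,1]) with ‖u_ρ‖_∞ = ρ satisfy u_ρ(t) = λ_ρ ∫₀¹ k(t,s) f(s, u_ρ(s), H[u_ρ]) ds for all t ∈ [0,1], then |λ_ρ| ≤ ρ / F_low(t_ρ). -/
open MeasureTheory Set

/-- Under assumptions (1)-(4) and (5b), any eigenvalue lam with eigenfunction of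
sup-norm rho satisfies |lam| <= rho / F_low(t_rho). -/
theorem hammerstein_eigenvalue_bound_5b
    (ρ : ℝ) (hρ : 0 < ρ)
    (k : ℝ → ℝ → ℝ)
    (hk_cont : ContinuousOn (fun p : ℝ × ℝ => k p.1 p.2)
      (Set.Icc 0 1 ×ˢ Set.Icc 0 1))
    (hk_nonneg : ∀ t ∈ Set.Icc (0:ℝ) 1, ∀ s ∈ Set.Icc (0:ℝ) 1, 0 ≤ k t s)
    (H : C(Set.Icc (0:ℝ) 1, ℝ) → ℝ)
    (hH_cont : ContinuousOn H (Metric.closedBall 0 ρ))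
    (Hlo Hup : ℝ)
    (hH_bd : ∀ u ∈ Metric.closedBall (0 : C(Set.Icc (0:ℝ) 1, ℝ)) ρ,
      Hlo ≤ H u ∧ H u ≤ Hup)
    (f : ℝ → ℝ → ℝ → ℝ)
    (hf_cont : ContinuousOn (fun p : ℝ × ℝ × ℝ => f p.1 p.2.1 p.2.2)
      (Set.Icc 0 1 ×ˢ Set.Icc (-ρ) ρ ×ˢ Set.Icc Hlo Hup))
    (flo fup : ℝ → ℝ)
    (hflo_cont : ContinuousOn flo (Set.Icc 0 1))
    (hfup_cont : ContinuousOn fup (Set.Icc 0 1))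
    (hf_bd : ∀ t ∈ Set.Icc (0:ℝ) 1, ∀ u ∈ Set.Icc (-ρ) ρ, ∀ v ∈ Set.Icc Hlo Hup,
      flo t ≤ f t u v ∧ f t u v ≤ fup t)
    (tρ : ℝ) (htρ : tρ ∈ Set.Icc (0:ℝ) 1)
    (h5b : 0 < ∫ s in (0:ℝ)..1, k tρ s * flo s)
    (lam : ℝ) (u : C(Set.Icc (0:ℝ) 1, ℝ)) (hu : ‖u‖ = ρ)
    (heq : ∀ t : Set.Icc (0:ℝ) 1, u t =
      lam * ∫ s in (0:ℝ)..1, k t s * f s (u (Set.projIcc 0 1 zero_le_one s)) (H u)) :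
    |lam| ≤ ρ / ∫ s in (0:ℝ)..1, k tρ s * flo s := by

  rw [le_div_iff₀ h5b]
  have huball : u ∈ Metric.closedBall (0 : C(Set.Icc (0:ℝ) 1, ℝ)) ρ := by
    simp [Metric.mem_closedBall, dist_zero_right, hu]
  obtain ⟨hHlo, hHup⟩ := hH_bd u huball
  have hurange : ∀ x : Set.Icc (0:ℝ) 1, u x ∈ Set.Icc (-ρ) ρ := by
    intro x
    have h := ContinuousMap.norm_coe_le_norm u x
    rw [hu, Real.norm_eq_abs] at h
    exact abs_le.mp h
  have hkc : ContinuousOn (fun s => k tρ s) (Set.Icc 0 1) := by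
    have hm : ContinuousOn (fun s : ℝ => ((tρ, s) : ℝ × ℝ)) (Set.Icc 0 1) :=
      (continuous_const.prodMk continuous_id).continuousOn
    exact hk_cont.comp hm (fun s hs => ⟨htρ, hs⟩)
  have hcomp : ContinuousOn
      (fun s : ℝ => f s (u (Set.projIcc 0 1 zero_le_one s)) (H u)) (Set.Icc 0 1) := by
    have hg : Continuous (fun s : ℝ =>
        ((s, u (Set.projIcc 0 1 zero_le_one s), H u) : ℝ × ℝ × ℝ)) :=
      continuous_id.prodMk ((u.continuous.comp continuous_projIcc).prodMk continuous_const)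
    exact ContinuousOn.comp hf_cont (hg.continuousOn (s := Set.Icc 0 1))
      (fun s hs => ⟨hs, hurange _, hHlo, hHup⟩)
  have huIcc : Set.uIcc (0:ℝ) 1 = Set.Icc 0 1 := Set.uIcc_of_le zero_le_one
  have hint1 : IntervalIntegrable (fun s => k tρ s * flo s) volume 0 1 := by
    apply ContinuousOn.intervalIntegrable
    rw [huIcc]; exact hkc.mul hflo_cont
  have hint2 : IntervalIntegrable
      (fun s => k tρ s * f s (u (Set.projIcc 0 1 zero_le_one s)) (H u)) volume 0 1 := by
    apply ContinuousOn.intervalIntegrable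
    rw [huIcc]; exact hkc.mul hcomp
  have hI : (∫ s in (0:ℝ)..1, k tρ s * flo s) ≤
      ∫ s in (0:ℝ)..1, k tρ s * f s (u (Set.projIcc 0 1 zero_le_one s)) (H u) := by
    apply intervalIntegral.integral_mono_on zero_le_one hint1 hint2
    intro s hs
    have hk0 := hk_nonneg tρ htρ s hs
    have hfb := (hf_bd s hs (u (Set.projIcc 0 1 zero_le_one s)) (hurange _) (H u) ⟨hHlo, hHup⟩).1
    exact mul_le_mul_of_nonneg_left hfb hk0
  have ht := heq ⟨tρ, htρ⟩
  have habs : |u ⟨tρ, htρ⟩| ≤ ρ := by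
    have h := ContinuousMap.norm_coe_le_norm u ⟨tρ, htρ⟩
    rwa [hu, Real.norm_eq_abs] at h
  rw [ht, abs_mul] at habs
  calc |lam| * (∫ s in (0:ℝ)..1, k tρ s * flo s)
      ≤ |lam| * ∫ s in (0:ℝ)..1,
          k tρ s * f s (u (Set.projIcc 0 1 zero_le_one s)) (H u) :=
        mul_le_mul_of_nonneg_left hI (abs_nonneg lam)
    _ ≤ |lam| * |∫ s in (0:ℝ)..1,
          k tρ s * f s (u (Set.projIcc 0 1 zero_le_one s)) (H u)| :=
        mul_le_mul_of_nonneg_left (le_abs_self _) (abs_nonneg lam)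
    _ ≤ ρ := habs
end

section
/- Under assumptions (1)–(4) and assumption (5a) — there exists t_ρ ∈ [0,1] with F_up(t_ρ) < 0 — if λ_ρ ∈ ℝ and u_ρ ∈ C([0,1]) with ‖u_ρ‖_∞ = ρ satisfy u_ρ(t) = λ_ρ ∫₀¹ k(t,s) f(s, u_ρ(s), H[u_ρ]) ds for all t ∈ [0,1], then |λ_ρ| ≤ −ρ / F_up(t_ρ). -/
open MeasureTheory Set

/-- Under assumptions (1)-(4) and (5a), any eigenvalue lam with eigenfunction of
sup-norm rho satisfies |lam| <= -rho / F_up(t_rho). -/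
theorem hammerstein_eigenvalue_bound_5a
    (ρ : ℝ) (hρ : 0 < ρ)
    (k : ℝ → ℝ → ℝ)
    (hk_cont : ContinuousOn (fun p : ℝ × ℝ => k p.1 p.2)
      (Set.Icc 0 1 ×ˢ Set.Icc 0 1))
    (hk_nonneg : ∀ t ∈ Set.Icc (0:ℝ) 1, ∀ s ∈ Set.Icc (0:ℝ) 1, 0 ≤ k t s)
    (H : C(Set.Icc (0:ℝ) 1, ℝ) → ℝ)
    (hH_cont : ContinuousOn H (Metric.closedBall 0 ρ))
    (Hlo Hup : ℝ)
    (hH_bd : ∀ u ∈ Metric.closedBall (0 : C(Set.Icc (0:ℝ) 1, ℝ)) ρ,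
      Hlo ≤ H u ∧ H u ≤ Hup)
    (f : ℝ → ℝ → ℝ → ℝ)
    (hf_cont : ContinuousOn (fun p : ℝ × ℝ × ℝ => f p.1 p.2.1 p.2.2)
      (Set.Icc 0 1 ×ˢ Set.Icc (-ρ) ρ ×ˢ Set.Icc Hlo Hup))
    (flo fup : ℝ → ℝ)
    (hflo_cont : ContinuousOn flo (Set.Icc 0 1))
    (hfup_cont : ContinuousOn fup (Set.Icc 0 1))
    (hf_bd : ∀ t ∈ Set.Icc (0:ℝ) 1, ∀ u ∈ Set.Icc (-ρ) ρ, ∀ v ∈ Set.Icc Hlo Hup,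
      flo t ≤ f t u v ∧ f t u v ≤ fup t)
    (tρ : ℝ) (htρ : tρ ∈ Set.Icc (0:ℝ) 1)
    (h5a : (∫ s in (0:ℝ)..1, k tρ s * fup s) < 0)
    (lam : ℝ) (u : C(Set.Icc (0:ℝ) 1, ℝ)) (hu : ‖u‖ = ρ)
    (heq : ∀ t : Set.Icc (0:ℝ) 1, u t =
      lam * ∫ s in (0:ℝ)..1, k t s * f s (u (Set.projIcc 0 1 zero_le_one s)) (H u)) :
    |lam| ≤ -ρ / ∫ s in (0:ℝ)..1, k tρ s * fup s := by
  set Fup := ∫ s in (0:ℝ)..1, k tρ s * fup s with hFup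
  have hu_mem : ∀ x : Set.Icc (0:ℝ) 1, u x ∈ Set.Icc (-ρ) ρ := by
    intro x
    have h1 : |u x| ≤ ‖u‖ := by simpa using u.norm_coe_le_norm x
    rw [hu] at h1
    exact abs_le.mp h1
  have huball : u ∈ Metric.closedBall (0 : C(Set.Icc (0:ℝ) 1, ℝ)) ρ := by
    simp [Metric.mem_closedBall, hu]
  have hH_mem : H u ∈ Set.Icc Hlo Hup := ⟨(hH_bd u huball).1, (hH_bd u huball).2⟩
  have hk1 : ContinuousOn (fun s => k tρ s) (Set.Icc (0:ℝ) 1) := by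
    have : ContinuousOn ((fun p : ℝ × ℝ => k p.1 p.2) ∘ (fun s => (tρ, s)))
        (Set.Icc (0:ℝ) 1) := by
      apply hk_cont.comp (by fun_prop)
      intro s hs
      exact Set.mk_mem_prod htρ hs
    exact this
  have hf1 : ContinuousOn (fun s => f s (u (Set.projIcc 0 1 zero_le_one s)) (H u))
      (Set.Icc (0:ℝ) 1) := by
    have : ContinuousOn ((fun p : ℝ × ℝ × ℝ => f p.1 p.2.1 p.2.2) ∘
        (fun s => (s, u (Set.projIcc 0 1 zero_le_one s), H u))) (Set.Icc (0:ℝ) 1) := by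
      apply hf_cont.comp
      · apply Continuous.continuousOn
        refine continuous_id.prodMk (Continuous.prodMk ?_ continuous_const)
        exact u.continuous.comp continuous_projIcc
      · intro s hs
        exact Set.mk_mem_prod hs (Set.mk_mem_prod (hu_mem _) hH_mem)
    exact this
  have hIcc : Set.uIcc (0:ℝ) 1 = Set.Icc 0 1 := Set.uIcc_of_le zero_le_one
  have hint1 : IntervalIntegrable
      (fun s => k tρ s * f s (u (Set.projIcc 0 1 zero_le_one s)) (H u)) volume 0 1 := by
    apply ContinuousOn.intervalIntegrable
    rw [hIcc]; exact hk1.mul hf1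
  have hint2 : IntervalIntegrable (fun s => k tρ s * fup s) volume 0 1 := by
    apply ContinuousOn.intervalIntegrable
    rw [hIcc]; exact hk1.mul hfup_cont
  set I := ∫ s in (0:ℝ)..1, k tρ s * f s (u (Set.projIcc 0 1 zero_le_one s)) (H u) with hI
  have hmono : I ≤ Fup := by
    apply intervalIntegral.integral_mono_on zero_le_one hint1 hint2
    intro s hs
    exact mul_le_mul_of_nonneg_left (hf_bd s hs _ (hu_mem _) _ hH_mem).2
      (hk_nonneg tρ htρ s hs)
  have hIneg : I < 0 := lt_of_le_of_lt hmono h5a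
  have heqt := heq ⟨tρ, htρ⟩
  have habs : |lam * I| ≤ ρ := by
    rw [← heqt, ← hu]
    simpa using u.norm_coe_le_norm ⟨tρ, htρ⟩
  have h2 : |lam| * (-I) = |lam * I| := by rw [abs_mul, abs_of_neg hIneg]
  have hkey : |lam| * (-Fup) ≤ ρ := by
    have h1 : |lam| * (-Fup) ≤ |lam| * (-I) :=
      mul_le_mul_of_nonneg_left (neg_le_neg hmono) (abs_nonneg lam)
    linarith [habs, h2 ▸ h1]
  have hFneg : 0 < -Fup := neg_pos.mpr h5a
  have hdiv : -ρ / Fup = ρ / (-Fup) := by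
    rw [div_neg, neg_div]
  rw [hdiv, le_div_iff₀ hFneg]
  exact hkey
end

section
/- Under assumptions (1)–(4), if there exists t_ρ ∈ [0,1] with F_up(t_ρ) < 0, then for every u ∈ C([0,1]) with ‖u‖_∞ = ρ one has ‖Tu‖_∞ ≥ −Tu(t_ρ) ≥ −F_up(t_ρ) > 0, where Tu(t) := ∫₀¹ k(t,s) f(s, u(s), H[u]) ds; in particular inf over all such u of ‖Tu‖_∞ is strictly positive. -/
open MeasureTheory Set

/-- Under assumptions (1)-(4), if F_up(t_rho) < 0 for some t_rho in [0,1], then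
for every u with sup-norm rho one has the chain
sup-norm of Tu >= -Tu(t_rho) >= -F_up(t_rho) > 0; in particular the infimum
over such u of the sup-norm of Tu is strictly positive. -/
theorem hammerstein_inf_positive_5a
    (ρ : ℝ) (hρ : 0 < ρ)
    (k : ℝ → ℝ → ℝ)
    (hk_cont : ContinuousOn (fun p : ℝ × ℝ => k p.1 p.2)
      (Set.Icc 0 1 ×ˢ Set.Icc 0 1))
    (hk_nonneg : ∀ t ∈ Set.Icc (0:ℝ) 1, ∀ s ∈ Set.Icc (0:ℝ) 1, 0 ≤ k t s)
    (H : C(Set.Icc (0:ℝ) 1, ℝ) → ℝ)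
    (hH_cont : ContinuousOn H (Metric.closedBall 0 ρ))
    (Hlo Hup : ℝ)
    (hH_bd : ∀ u ∈ Metric.closedBall (0 : C(Set.Icc (0:ℝ) 1, ℝ)) ρ,
      Hlo ≤ H u ∧ H u ≤ Hup)
    (f : ℝ → ℝ → ℝ → ℝ)
    (hf_cont : ContinuousOn (fun p : ℝ × ℝ × ℝ => f p.1 p.2.1 p.2.2)
      (Set.Icc 0 1 ×ˢ Set.Icc (-ρ) ρ ×ˢ Set.Icc Hlo Hup))
    (flo fup : ℝ → ℝ)
    (hflo_cont : ContinuousOn flo (Set.Icc 0 1))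
    (hfup_cont : ContinuousOn fup (Set.Icc 0 1))
    (hf_bd : ∀ t ∈ Set.Icc (0:ℝ) 1, ∀ u ∈ Set.Icc (-ρ) ρ, ∀ v ∈ Set.Icc Hlo Hup,
      flo t ≤ f t u v ∧ f t u v ≤ fup t)
    (tρ : ℝ) (htρ : tρ ∈ Set.Icc (0:ℝ) 1)
    (h5a : (∫ s in (0:ℝ)..1, k tρ s * fup s) < 0) :
    (∀ u : C(Set.Icc (0:ℝ) 1, ℝ), ‖u‖ = ρ →
      (-(∫ s in (0:ℝ)..1, k tρ s * f s (u (Set.projIcc 0 1 zero_le_one s)) (H u)) ≤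
        ⨆ t : Set.Icc (0:ℝ) 1,
          |∫ s in (0:ℝ)..1, k (t:ℝ) s * f s (u (Set.projIcc 0 1 zero_le_one s)) (H u)|) ∧
      (-(∫ s in (0:ℝ)..1, k tρ s * fup s) ≤
        -(∫ s in (0:ℝ)..1, k tρ s * f s (u (Set.projIcc 0 1 zero_le_one s)) (H u)))) ∧
    0 < -(∫ s in (0:ℝ)..1, k tρ s * fup s) ∧
    0 < ⨅ u : {u : C(Set.Icc (0:ℝ) 1, ℝ) // ‖u‖ = ρ},
        ⨆ t : Set.Icc (0:ℝ) 1,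
          |∫ s in (0:ℝ)..1, k (t:ℝ) s * f s ((u : C(Set.Icc (0:ℝ) 1, ℝ)) (Set.projIcc 0 1 zero_le_one s)) (H u)| := by

  obtain ⟨M, hM⟩ := (isCompact_Icc.prod isCompact_Icc).exists_bound_of_continuousOn hk_cont
  obtain ⟨B1, hB1⟩ := isCompact_Icc.exists_bound_of_continuousOn hflo_cont
  obtain ⟨B2, hB2⟩ := isCompact_Icc.exists_bound_of_continuousOn hfup_cont
  set B := max B1 B2 with hB
  -- per-u facts
  have key : ∀ u : C(Set.Icc (0:ℝ) 1, ℝ), ‖u‖ = ρ →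
      (-(∫ s in (0:ℝ)..1, k tρ s * f s (u (Set.projIcc 0 1 zero_le_one s)) (H u)) ≤
        ⨆ t : Set.Icc (0:ℝ) 1,
          |∫ s in (0:ℝ)..1, k (t:ℝ) s * f s (u (Set.projIcc 0 1 zero_le_one s)) (H u)|) ∧
      (-(∫ s in (0:ℝ)..1, k tρ s * fup s) ≤
        -(∫ s in (0:ℝ)..1, k tρ s * f s (u (Set.projIcc 0 1 zero_le_one s)) (H u))) := by
    intro u hu
    set g : ℝ → ℝ := fun s => f s (u (Set.projIcc 0 1 zero_le_one s)) (H u) with hgdef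
    have hu_mem : u ∈ Metric.closedBall (0 : C(Set.Icc (0:ℝ) 1, ℝ)) ρ := by
      simp [Metric.mem_closedBall, dist_zero_right, hu]
    have hHu := hH_bd u hu_mem
    have hval : ∀ s : ℝ, u (Set.projIcc 0 1 zero_le_one s) ∈ Set.Icc (-ρ) ρ := by
      intro s
      have h1 : ‖u (Set.projIcc 0 1 zero_le_one s)‖ ≤ ‖u‖ := u.norm_coe_le_norm _
      rw [hu, Real.norm_eq_abs] at h1
      exact abs_le.mp h1
    have hg_cont : ContinuousOn g (Set.Icc 0 1) := by
      have hmap : ContinuousOn (fun s : ℝ =>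
          ((s, (u (Set.projIcc 0 1 zero_le_one s), H u)) : ℝ × ℝ × ℝ)) (Set.Icc 0 1) := by
        apply ContinuousOn.prodMk continuousOn_id
        apply ContinuousOn.prodMk _ continuousOn_const
        exact (u.continuous.comp (continuous_projIcc)).continuousOn
      exact hf_cont.comp hmap (fun s hs => ⟨hs, hval s, hHu.1, hHu.2⟩)
    have hgb : ∀ s ∈ Set.Icc (0:ℝ) 1, |g s| ≤ B := by
      intro s hs
      have hb := hf_bd s hs _ (hval s) _ ⟨hHu.1, hHu.2⟩
      have h1 : -B ≤ g s := by
        have := hB1 s hs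
        rw [Real.norm_eq_abs] at this
        have : -B1 ≤ flo s := neg_le_of_abs_le this
        nlinarith [le_max_left B1 B2, hb.1]
      have h2 : g s ≤ B := by
        have := hB2 s hs
        rw [Real.norm_eq_abs] at this
        have : fup s ≤ B2 := le_of_abs_le this
        nlinarith [le_max_right B1 B2, hb.2]
      exact abs_le.mpr ⟨h1, h2⟩
    have hk_cont_t : ∀ t ∈ Set.Icc (0:ℝ) 1, ContinuousOn (fun s => k t s) (Set.Icc 0 1) := by
      intro t ht
      have : ContinuousOn (fun s : ℝ => ((t, s) : ℝ × ℝ)) (Set.Icc 0 1) :=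
        ContinuousOn.prodMk continuousOn_const continuousOn_id
      exact hk_cont.comp this (fun s hs => ⟨ht, hs⟩)
    have hInt_g : ∀ t ∈ Set.Icc (0:ℝ) 1,
        IntervalIntegrable (fun s => k t s * g s) MeasureTheory.volume 0 1 := by
      intro t ht
      apply ContinuousOn.intervalIntegrable
      rw [Set.uIcc_of_le zero_le_one]
      exact (hk_cont_t t ht).mul hg_cont
    have hInt_up : IntervalIntegrable (fun s => k tρ s * fup s) MeasureTheory.volume 0 1 := by
      apply ContinuousOn.intervalIntegrable
      rw [Set.uIcc_of_le zero_le_one]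
      exact (hk_cont_t tρ htρ).mul hfup_cont
    have hmono : (∫ s in (0:ℝ)..1, k tρ s * g s) ≤ ∫ s in (0:ℝ)..1, k tρ s * fup s := by
      apply intervalIntegral.integral_mono_on zero_le_one (hInt_g tρ htρ) hInt_up
      intro s hs
      exact mul_le_mul_of_nonneg_left
        (hf_bd s hs _ (hval s) _ ⟨hHu.1, hHu.2⟩).2 (hk_nonneg tρ htρ s hs)
    have hbdd : BddAbove (Set.range (fun t : Set.Icc (0:ℝ) 1 =>
        |∫ s in (0:ℝ)..1, k (t:ℝ) s * g s|)) := by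
      refine ⟨M * B, ?_⟩
      rintro x ⟨t, rfl⟩
      have : ‖∫ s in (0:ℝ)..1, k (t:ℝ) s * g s‖ ≤ M * B * |(1:ℝ) - 0| := by
        apply intervalIntegral.norm_integral_le_of_norm_le_const
        intro s hs
        rw [Set.uIoc_of_le zero_le_one] at hs
        have hs' : s ∈ Set.Icc (0:ℝ) 1 := ⟨le_of_lt hs.1, hs.2⟩
        have h1 := hM ((t:ℝ), s) ⟨t.2, hs'⟩
        rw [Real.norm_eq_abs] at h1 ⊢
        rw [abs_mul]
        exact mul_le_mul h1 (hgb s hs') (abs_nonneg _) ((abs_nonneg _).trans h1)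
      simpa using this
    have hle_sup : |∫ s in (0:ℝ)..1, k tρ s * g s| ≤
        ⨆ t : Set.Icc (0:ℝ) 1, |∫ s in (0:ℝ)..1, k (t:ℝ) s * g s| :=
      le_ciSup hbdd (⟨tρ, htρ⟩ : Set.Icc (0:ℝ) 1)
    exact ⟨le_trans (neg_le_abs _) hle_sup, neg_le_neg hmono⟩
  have hpos : 0 < -(∫ s in (0:ℝ)..1, k tρ s * fup s) := by linarith
  refine ⟨key, hpos, ?_⟩
  have hne : Nonempty {u : C(Set.Icc (0:ℝ) 1, ℝ) // ‖u‖ = ρ} := by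
    refine ⟨⟨ContinuousMap.const _ ρ, ?_⟩⟩
    refine le_antisymm ((ContinuousMap.norm_le _ hρ.le).mpr fun x => by
      simp [Real.norm_eq_abs, abs_of_pos hρ]) ?_
    have h := (ContinuousMap.const (Set.Icc (0:ℝ) 1) ρ).norm_coe_le_norm ⟨0, by norm_num⟩
    simpa [Real.norm_eq_abs, abs_of_pos hρ] using h
  refine lt_of_lt_of_le hpos (le_ciInf ?_)
  rintro ⟨u, hu⟩
  exact le_trans (key u hu).2 (key u hu).1
end

section
/- Let ρ > 0, let k(t,s) := min{t,s} on [0,1]², and define F_low(t) := e^{−2ρ} ∫₀^{2/3} k(t,s) sin((3π/2)s) ds + e^{2ρ} ∫_{2/3}^{1} k(t,s) sin((3π/2)s) ds. Then F_low is nonincreasing on [2/3, 1], and F_low(2/3) = (4/(9π))(e^{−2ρ} − e^{2ρ}) < 0. -/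
open MeasureTheory Set Real

noncomputable def Fanti (s : ℝ) : ℝ :=
  Real.sin (3 * π / 2 * s) * (4/(9*π^2)) - s * Real.cos (3 * π / 2 * s) * (2/(3*π))

noncomputable def Ganti (s : ℝ) : ℝ := - Real.cos (3 * π / 2 * s) * (2/(3*π))

lemma hasDerivAt_lin (s : ℝ) : HasDerivAt (fun s : ℝ => 3 * π / 2 * s) (3 * π / 2) s := by
  simpa using (hasDerivAt_id s).const_mul (3 * π / 2)

lemma hasDerivAt_Fanti (s : ℝ) : HasDerivAt Fanti (s * Real.sin (3 * π / 2 * s)) s := by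
  have hπ : (π:ℝ) ≠ 0 := Real.pi_ne_zero
  have hs : HasDerivAt (fun s : ℝ => Real.sin (3 * π / 2 * s))
      (Real.cos (3 * π / 2 * s) * (3 * π / 2)) s :=
    (Real.hasDerivAt_sin _).comp s (hasDerivAt_lin s)
  have hc : HasDerivAt (fun s : ℝ => Real.cos (3 * π / 2 * s))
      (-Real.sin (3 * π / 2 * s) * (3 * π / 2)) s :=
    (Real.hasDerivAt_cos _).comp s (hasDerivAt_lin s)
  have := ((hs.mul_const (4/(9*π^2))).sub
    (((hasDerivAt_id s).mul hc).mul_const (2/(3*π))))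
  refine this.congr_deriv ?_
  simp only [id_eq]
  field_simp
  ring

lemma hasDerivAt_Ganti (s : ℝ) : HasDerivAt Ganti (Real.sin (3 * π / 2 * s)) s := by
  have hπ : (π:ℝ) ≠ 0 := Real.pi_ne_zero
  have hc : HasDerivAt (fun s : ℝ => Real.cos (3 * π / 2 * s))
      (-Real.sin (3 * π / 2 * s) * (3 * π / 2)) s :=
    (Real.hasDerivAt_cos _).comp s (hasDerivAt_lin s)
  have := (hc.neg).mul_const (2/(3*π))
  refine this.congr_deriv ?_
  field_simp

lemma cont_ssin : Continuous (fun s : ℝ => s * Real.sin (3 * π / 2 * s)) := by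
  continuity

lemma sin_at_23 : Real.sin (3 * π / 2 * (2/3)) = 0 := by
  rw [show (3 * π / 2 * (2/3) : ℝ) = π by ring, Real.sin_pi]

lemma cos_at_23 : Real.cos (3 * π / 2 * (2/3)) = -1 := by
  rw [show (3 * π / 2 * (2/3) : ℝ) = π by ring, Real.cos_pi]

lemma cos_at_1 : Real.cos (3 * π / 2 * 1) = 0 := by
  rw [show (3 * π / 2 * 1 : ℝ) = π + π/2 by ring, Real.cos_add, Real.cos_pi_div_two,
    Real.sin_pi_div_two, Real.sin_pi, Real.cos_pi]
  ring

lemma integral_ssin (a b : ℝ) :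
    (∫ s in a..b, s * Real.sin (3 * π / 2 * s)) = Fanti b - Fanti a := by
  exact intervalIntegral.integral_eq_sub_of_hasDerivAt (fun x _ => hasDerivAt_Fanti x)
    (cont_ssin.intervalIntegrable a b)

lemma integral_sin' (a b : ℝ) :
    (∫ s in a..b, Real.sin (3 * π / 2 * s)) = Ganti b - Ganti a := by
  exact intervalIntegral.integral_eq_sub_of_hasDerivAt (fun x _ => hasDerivAt_Ganti x)
    ((by continuity : Continuous (fun s : ℝ => Real.sin (3 * π / 2 * s))).intervalIntegrable a b)

lemma first_integral (t : ℝ) (ht : t ∈ Set.Icc (2/3:ℝ) 1) :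
    (∫ s in (0:ℝ)..(2/3), min t s * Real.sin (3 * π / 2 * s)) = 4/(9*π) := by
  have hcong : (∫ s in (0:ℝ)..(2/3), min t s * Real.sin (3 * π / 2 * s))
      = ∫ s in (0:ℝ)..(2/3), s * Real.sin (3 * π / 2 * s) := by
    apply intervalIntegral.integral_congr
    intro s hs
    rw [Set.uIcc_of_le (by norm_num)] at hs
    have : min t s = s := min_eq_right (le_trans hs.2 ht.1)
    simp only [this]
  rw [hcong, integral_ssin]
  simp [Fanti, sin_at_23, cos_at_23]
  field_simp
  ring

lemma second_integral (t : ℝ) (ht : t ∈ Set.Icc (2/3:ℝ) 1) :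
    (∫ s in (2/3:ℝ)..1, min t s * Real.sin (3 * π / 2 * s))
      = Real.sin (3 * π / 2 * t) * (4/(9*π^2)) - 4/(9*π) := by
  obtain ⟨ht1, ht2⟩ := ht
  have hint : ∀ a b : ℝ, IntervalIntegrable (fun s => min t s * Real.sin (3 * π / 2 * s))
      volume a b := fun a b => by
    apply Continuous.intervalIntegrable
    exact ((continuous_const.min continuous_id).mul (by continuity))
  have hsplit := intervalIntegral.integral_add_adjacent_intervals (hint (2/3) t) (hint t 1)
  rw [← hsplit]
  have h1 : (∫ s in (2/3:ℝ)..t, min t s * Real.sin (3 * π / 2 * s))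
      = ∫ s in (2/3:ℝ)..t, s * Real.sin (3 * π / 2 * s) := by
    apply intervalIntegral.integral_congr
    intro s hs
    rw [Set.uIcc_of_le ht1] at hs
    simp only [min_eq_right hs.2]
  have h2 : (∫ s in t..(1:ℝ), min t s * Real.sin (3 * π / 2 * s))
      = ∫ s in t..(1:ℝ), t * Real.sin (3 * π / 2 * s) := by
    apply intervalIntegral.integral_congr
    intro s hs
    rw [Set.uIcc_of_le ht2] at hs
    simp only [min_eq_left hs.1]
  rw [h1, h2, integral_ssin, intervalIntegral.integral_const_mul, integral_sin']
  simp only [Fanti, Ganti, sin_at_23, cos_at_23, cos_at_1]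
  field_simp
  ring

lemma flow_formula (ρ : ℝ) (Flow : ℝ → ℝ)
    (hFlow : ∀ t : ℝ, Flow t =
      Real.exp (-(2*ρ)) * (∫ s in (0:ℝ)..(2/3), min t s * Real.sin (3 * π / 2 * s)) +
      Real.exp (2*ρ) * ∫ s in (2/3:ℝ)..1, min t s * Real.sin (3 * π / 2 * s))
    (t : ℝ) (ht : t ∈ Set.Icc (2/3:ℝ) 1) :
    Flow t = Real.exp (-(2*ρ)) * (4/(9*π)) +
      Real.exp (2*ρ) * (Real.sin (3 * π / 2 * t) * (4/(9*π^2)) - 4/(9*π)) := by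
  rw [hFlow t, first_integral t ht, second_integral t ht]

lemma sin_mono (x y : ℝ) (hx : x ∈ Set.Icc (2/3:ℝ) 1) (hy : y ∈ Set.Icc (2/3:ℝ) 1)
    (hxy : x ≤ y) : Real.sin (3 * π / 2 * y) ≤ Real.sin (3 * π / 2 * x) := by
  have hπ := Real.pi_pos
  have hx' : 3 * π / 2 * x - π ∈ Set.Icc (-(π/2)) (π/2) := by
    constructor <;> nlinarith [hx.1, hx.2]
  have hy' : 3 * π / 2 * y - π ∈ Set.Icc (-(π/2)) (π/2) := by
    constructor <;> nlinarith [hy.1, hy.2]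
  have hmono : Real.sin (3 * π / 2 * x - π) ≤ Real.sin (3 * π / 2 * y - π) := by
    apply Real.strictMonoOn_sin.monotoneOn hx' hy'
    nlinarith
  have ex := Real.sin_add_pi (3 * π / 2 * x - π)
  have ey := Real.sin_add_pi (3 * π / 2 * y - π)
  rw [sub_add_cancel] at ex ey
  rw [ex, ey]
  linarith

/-- For the mixed-BC Green's function k(t,s) = min(t,s), the function F_low is
nonincreasing on [2/3, 1] and F_low(2/3) = (4/(9 pi))(exp(-2 rho) - exp(2 rho)) < 0. -/
theorem mixed_Flow_on_right_interval
    (ρ : ℝ) (hρ : 0 < ρ)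
    (Flow : ℝ → ℝ)
    (hFlow : ∀ t : ℝ, Flow t =
      Real.exp (-(2*ρ)) * (∫ s in (0:ℝ)..(2/3), min t s * Real.sin (3 * π / 2 * s)) +
      Real.exp (2*ρ) * ∫ s in (2/3:ℝ)..1, min t s * Real.sin (3 * π / 2 * s)) :
    AntitoneOn Flow (Set.Icc (2/3 : ℝ) 1) ∧
    Flow (2/3) = 4 / (9 * π) * (Real.exp (-(2*ρ)) - Real.exp (2*ρ)) ∧
    Flow (2/3) < 0 := by
  have hπ := Real.pi_pos
  have h23 : (2/3:ℝ) ∈ Set.Icc (2/3:ℝ) 1 := by norm_num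
  have hval : Flow (2/3) = 4 / (9 * π) * (Real.exp (-(2*ρ)) - Real.exp (2*ρ)) := by
    rw [flow_formula ρ Flow hFlow (2/3) h23, sin_at_23]
    ring
  refine ⟨?_, hval, ?_⟩
  · intro x hx y hy hxy
    rw [flow_formula ρ Flow hFlow x hx, flow_formula ρ Flow hFlow y hy]
    have hsin := sin_mono x y hx hy hxy
    have hexp : (0:ℝ) < Real.exp (2*ρ) := Real.exp_pos _
    have hc : (0:ℝ) < 4/(9*π^2) := by positivity
    apply add_le_add_right
    apply mul_le_mul_of_nonneg_left _ hexp.le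
    apply sub_le_sub_right
    exact mul_le_mul_of_nonneg_right hsin hc.le
  · rw [hval]
    have : Real.exp (-(2*ρ)) < Real.exp (2*ρ) := Real.exp_lt_exp.mpr (by linarith)
    have h4 : (0:ℝ) < 4/(9*π) := by positivity
    nlinarith
end

section
/- Let ρ > 0, let k(t,s) := min{t,s} on [0,1]², and define F_low(t) := e^{−2ρ} ∫₀^{2/3} k(t,s) sin((3π/2)s) ds + e^{2ρ} ∫_{2/3}^{1} k(t,s) sin((3π/2)s) ds. If 0 < ρ < (1/4)·ln 2, then, with t_ρ := (2/(3π))·arccos(e^{4ρ} − 1), one has F_low(t_ρ) > 0 and F_low(t_ρ) = max_{t ∈ [0,1]} F_low(t). If ρ ≥ (1/4)·ln 2, then F_low(t) ≤ 0 for every t ∈ [0,1]. -/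
open MeasureTheory Set Real

lemma intSin (a b : ℝ) : ∫ s in a..b, Real.sin (3 * π / 2 * s)
    = (Real.cos (3*π/2*a) - Real.cos (3*π/2*b)) / (3*π/2) := by
  have hω : (3*π/2 : ℝ) ≠ 0 := by positivity
  have hd : ∀ x ∈ Set.uIcc a b, HasDerivAt (fun s => -Real.cos (3*π/2*s) / (3*π/2))
      (Real.sin (3*π/2*x)) x := by
    intro x _
    have h1 : HasDerivAt (fun s : ℝ => 3*π/2*s) (3*π/2) x := by
      simpa using (hasDerivAt_id x).const_mul (3*π/2)
    have h2 := (Real.hasDerivAt_cos (3*π/2*x)).comp x h1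
    have h3 := (h2.neg).div_const (3*π/2)
    exact h3.congr_deriv (by rw [div_eq_iff hω]; ring)
  rw [intervalIntegral.integral_eq_sub_of_hasDerivAt hd
    ((Real.continuous_sin.comp (continuous_const.mul continuous_id)).intervalIntegrable a b)]
  ring

lemma intMulSin (a b : ℝ) : ∫ s in a..b, s * Real.sin (3 * π / 2 * s)
    = ((Real.sin (3*π/2*b) - 3*π/2*b*Real.cos (3*π/2*b))
      - (Real.sin (3*π/2*a) - 3*π/2*a*Real.cos (3*π/2*a))) / (3*π/2)^2 := by
  have hω : (3*π/2 : ℝ) ≠ 0 := by positivity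
  have hd : ∀ x ∈ Set.uIcc a b, HasDerivAt
      (fun s => (Real.sin (3*π/2*s) - 3*π/2*s*Real.cos (3*π/2*s)) / (3*π/2)^2)
      (x * Real.sin (3*π/2*x)) x := by
    intro x _
    have h1 : HasDerivAt (fun s : ℝ => 3*π/2*s) (3*π/2) x := by
      simpa using (hasDerivAt_id x).const_mul (3*π/2)
    have hs := (Real.hasDerivAt_sin (3*π/2*x)).comp x h1
    have hc := (Real.hasDerivAt_cos (3*π/2*x)).comp x h1
    have hm : HasDerivAt (fun s : ℝ => 3*π/2*s*Real.cos (3*π/2*s))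
        (3*π/2*Real.cos (3*π/2*x) + 3*π/2*x*(-Real.sin (3*π/2*x)*(3*π/2))) x :=
      h1.mul hc
    have := ((hs.sub hm).div_const ((3*π/2)^2))
    exact this.congr_deriv (by rw [div_eq_iff (pow_ne_zero 2 hω)]; ring)
  rw [intervalIntegral.integral_eq_sub_of_hasDerivAt hd
    ((continuous_id.mul (Real.continuous_sin.comp (continuous_const.mul continuous_id))).intervalIntegrable a b)]
  ring

lemma minContinuous (t : ℝ) : Continuous fun s : ℝ => min t s * Real.sin (3*π/2*s) :=
  (continuous_const.min continuous_id).mul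
    (Real.continuous_sin.comp (continuous_const.mul continuous_id))

lemma I1_small {t : ℝ} (h0 : 0 ≤ t) (h1 : t ≤ 2/3) :
    ∫ s in (0:ℝ)..(2/3), min t s * Real.sin (3*π/2*s)
    = Real.sin (3*π/2*t)/(3*π/2)^2 + t/(3*π/2) := by
  have hπ : (0:ℝ) < π := Real.pi_pos
  rw [← intervalIntegral.integral_add_adjacent_intervals (a := (0:ℝ)) (b := t) (c := 2/3)
      ((minContinuous t).intervalIntegrable 0 t) ((minContinuous t).intervalIntegrable t (2/3))]
  have e1 : ∫ s in (0:ℝ)..t, min t s * Real.sin (3*π/2*s)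
      = ∫ s in (0:ℝ)..t, s * Real.sin (3*π/2*s) := by
    apply intervalIntegral.integral_congr
    intro s hs
    rw [Set.uIcc_of_le h0] at hs
    simp [min_eq_right hs.2]
  have e2 : ∫ s in t..(2/3:ℝ), min t s * Real.sin (3*π/2*s)
      = ∫ s in t..(2/3:ℝ), t * Real.sin (3*π/2*s) := by
    apply intervalIntegral.integral_congr
    intro s hs
    rw [Set.uIcc_of_le h1] at hs
    simp [min_eq_left hs.1]
  rw [e1, e2, intMulSin, intervalIntegral.integral_const_mul, intSin,
    show 3*π/2*(2/3:ℝ) = π by ring]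
  simp [Real.cos_pi]
  field_simp
  ring

lemma I1_big {t : ℝ} (h : 2/3 ≤ t) :
    ∫ s in (0:ℝ)..(2/3), min t s * Real.sin (3*π/2*s) = π/(3*π/2)^2 := by
  have hπ : (0:ℝ) < π := Real.pi_pos
  have e1 : ∫ s in (0:ℝ)..(2/3), min t s * Real.sin (3*π/2*s)
      = ∫ s in (0:ℝ)..(2/3), s * Real.sin (3*π/2*s) := by
    apply intervalIntegral.integral_congr
    intro s hs
    rw [Set.uIcc_of_le (by norm_num : (0:ℝ) ≤ 2/3)] at hs
    simp [min_eq_right (hs.2.trans h)]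
  rw [e1, intMulSin, show 3*π/2*(2/3:ℝ) = π by ring]
  simp [Real.cos_pi]

lemma cos3pi2 : Real.cos (3*π/2*(1:ℝ)) = 0 := by
  rw [show 3*π/2*(1:ℝ) = π + π/2 by ring]
  simp [Real.cos_add]

lemma I2_small {t : ℝ} (h1 : t ≤ 2/3) :
    ∫ s in (2/3:ℝ)..1, min t s * Real.sin (3*π/2*s) = -(t/(3*π/2)) := by
  have hπ : (0:ℝ) < π := Real.pi_pos
  have e1 : ∫ s in (2/3:ℝ)..1, min t s * Real.sin (3*π/2*s)
      = ∫ s in (2/3:ℝ)..1, t * Real.sin (3*π/2*s) := by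
    apply intervalIntegral.integral_congr
    intro s hs
    rw [Set.uIcc_of_le (by norm_num : (2/3:ℝ) ≤ 1)] at hs
    simp [min_eq_left (h1.trans hs.1)]
  rw [e1, intervalIntegral.integral_const_mul, intSin, show 3*π/2*(2/3:ℝ) = π by ring, cos3pi2]
  simp [Real.cos_pi]
  field_simp

lemma I2_big {t : ℝ} (h23 : 2/3 ≤ t) (h1 : t ≤ 1) :
    ∫ s in (2/3:ℝ)..1, min t s * Real.sin (3*π/2*s)
    = (Real.sin (3*π/2*t) - π)/(3*π/2)^2 := by
  have hπ : (0:ℝ) < π := Real.pi_pos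
  rw [← intervalIntegral.integral_add_adjacent_intervals (a := (2/3:ℝ)) (b := t) (c := 1)
      ((minContinuous t).intervalIntegrable _ _) ((minContinuous t).intervalIntegrable _ _)]
  have e1 : ∫ s in (2/3:ℝ)..t, min t s * Real.sin (3*π/2*s)
      = ∫ s in (2/3:ℝ)..t, s * Real.sin (3*π/2*s) := by
    apply intervalIntegral.integral_congr
    intro s hs
    rw [Set.uIcc_of_le h23] at hs
    simp [min_eq_right hs.2]
  have e2 : ∫ s in t..(1:ℝ), min t s * Real.sin (3*π/2*s)
      = ∫ s in t..(1:ℝ), t * Real.sin (3*π/2*s) := by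
    apply intervalIntegral.integral_congr
    intro s hs
    rw [Set.uIcc_of_le h1] at hs
    simp [min_eq_left hs.1]
  rw [e1, e2, intMulSin, intervalIntegral.integral_const_mul, intSin,
    show 3*π/2*(2/3:ℝ) = π by ring, cos3pi2]
  simp [Real.cos_pi]
  field_simp
  ring


lemma sin_linear_max {x₀ x : ℝ} (h₀ : x₀ ∈ Set.Icc 0 π) (hx : x ∈ Set.Icc 0 π) :
    Real.sin x - Real.cos x₀ * x ≤ Real.sin x₀ - Real.cos x₀ * x₀ := by
  set c := Real.cos x₀ with hc
  set g : ℝ → ℝ := fun y => Real.sin y - c * y with hg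
  have hder : ∀ y : ℝ, HasDerivAt g (Real.cos y - c) y := by
    intro y
    exact ((Real.hasDerivAt_sin y).sub ((hasDerivAt_id y).const_mul c)).congr_deriv (by ring)
  have hderiv : ∀ y : ℝ, deriv g y = Real.cos y - c := fun y => (hder y).deriv
  rcases le_total x x₀ with h | h
  · have hmono : MonotoneOn g (Set.Icc 0 x₀) := by
      apply monotoneOn_of_deriv_nonneg (convex_Icc _ _)
        (Continuous.continuousOn (by continuity))
        (fun y _ => (hder y).differentiableAt.differentiableWithinAt)
      intro y hy
      rw [interior_Icc] at hy
      rw [hderiv]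
      have := Real.cos_le_cos_of_nonneg_of_le_pi hy.1.le h₀.2 hy.2.le
      linarith
    exact hmono ⟨hx.1, h⟩ ⟨le_refl 0 |>.trans h₀.1, le_refl x₀⟩ h
  · have hanti : AntitoneOn g (Set.Icc x₀ π) := by
      apply antitoneOn_of_deriv_nonpos (convex_Icc _ _)
        (Continuous.continuousOn (by continuity))
        (fun y _ => (hder y).differentiableAt.differentiableWithinAt)
      intro y hy
      rw [interior_Icc] at hy
      rw [hderiv]
      have := Real.cos_le_cos_of_nonneg_of_le_pi h₀.1 hy.2.le hy.1.le
      linarith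
    exact hanti ⟨le_refl x₀, h₀.2⟩ ⟨h, hx.2⟩ h

/-- For the mixed-BC Green's function k(t,s) = min(t,s): if 0 < rho < (1/4) ln 2
then F_low attains a positive maximum over [0,1] at
t_rho = (2/(3 pi)) arccos(exp(4 rho) - 1); if rho >= (1/4) ln 2 then
F_low <= 0 on [0,1]. -/
theorem mixed_Flow_maximum
    (ρ : ℝ) (hρ : 0 < ρ)
    (Flow : ℝ → ℝ)
    (hFlow : ∀ t : ℝ, Flow t =
      Real.exp (-(2*ρ)) * (∫ s in (0:ℝ)..(2/3), min t s * Real.sin (3 * π / 2 * s)) +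
      Real.exp (2*ρ) * ∫ s in (2/3:ℝ)..1, min t s * Real.sin (3 * π / 2 * s)) :
    (ρ < 1/4 * Real.log 2 →
      0 < Flow (2 / (3 * π) * Real.arccos (Real.exp (4*ρ) - 1)) ∧
      (2 / (3 * π) * Real.arccos (Real.exp (4*ρ) - 1)) ∈ Set.Icc (0:ℝ) 1 ∧
      ∀ t ∈ Set.Icc (0:ℝ) 1,
        Flow t ≤ Flow (2 / (3 * π) * Real.arccos (Real.exp (4*ρ) - 1))) ∧
    (1/4 * Real.log 2 ≤ ρ → ∀ t ∈ Set.Icc (0:ℝ) 1, Flow t ≤ 0) := by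
  have hπ : (0:ℝ) < π := Real.pi_pos
  have hE : 0 < Real.exp (-(2*ρ)) := Real.exp_pos _
  have hA1 : 1 < Real.exp (4*ρ) := by
    rw [← Real.exp_zero]
    exact Real.exp_lt_exp.mpr (by linarith)
  have hEA : Real.exp (2*ρ) = Real.exp (-(2*ρ)) * Real.exp (4*ρ) := by
    rw [← Real.exp_add]; ring_nf
  set A := Real.exp (4*ρ) with hAdef
  have hK : 0 < Real.exp (-(2*ρ)) / (3*π/2)^2 := by positivity
  have Fsmall : ∀ t, 0 ≤ t → t ≤ 2/3 → Flow t =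
      Real.exp (-(2*ρ)) / (3*π/2)^2 * (Real.sin (3*π/2*t) - (A - 1) * (3*π/2*t)) := by
    intro t h0 h1
    rw [hFlow t, I1_small h0 h1, I2_small h1, hEA]
    field_simp
    ring
  have Fbig : ∀ t, 2/3 ≤ t → t ≤ 1 → Flow t =
      Real.exp (-(2*ρ)) / (3*π/2)^2 * (π + A * (Real.sin (3*π/2*t) - π)) := by
    intro t h0 h1
    rw [hFlow t, I1_big h0, I2_big h0 h1, hEA]
    field_simp
  have hsin_np : ∀ t, 2/3 ≤ t → t ≤ 1 → Real.sin (3*π/2*t) ≤ 0 := by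
    intro t h h'
    have h1 : π ≤ 3*π/2*t := by nlinarith
    have h2 : 3*π/2*t ≤ 3*π/2 := by nlinarith
    have h3 : 0 ≤ Real.sin (3*π/2*t - π) :=
      Real.sin_nonneg_of_nonneg_of_le_pi (by linarith) (by linarith)
    rw [Real.sin_sub_pi] at h3
    linarith
  have Fbig_neg : ∀ t, 2/3 ≤ t → t ≤ 1 → Flow t < 0 := by
    intro t h0 h1
    rw [Fbig t h0 h1]
    apply mul_neg_of_pos_of_neg hK
    have := hsin_np t h0 h1
    nlinarith
  constructor
  · intro hρ2
    have hA2 : A < 2 := by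
      rw [hAdef, show (2:ℝ) = Real.exp (Real.log 2) by rw [Real.exp_log]; norm_num]
      exact Real.exp_lt_exp.mpr (by linarith)
    set c := A - 1 with hcdef
    have hc0 : 0 < c := by linarith
    have hc1 : c < 1 := by linarith
    set x₀ := Real.arccos c with hx₀def
    have hx₀0 : 0 < x₀ := Real.arccos_pos.mpr hc1
    have hx₀half : x₀ < π/2 := Real.arccos_lt_pi_div_two.mpr hc0
    have hcos : Real.cos x₀ = c := Real.cos_arccos (by linarith) hc1.le
    set tρ := 2 / (3 * π) * x₀ with htρdef
    have hωt : 3*π/2*tρ = x₀ := by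
      rw [htρdef]; field_simp
    have htρ0 : 0 ≤ tρ := by positivity
    have htρ13 : tρ ≤ 1/3 := by
      rw [htρdef]
      rw [div_mul_eq_mul_div, div_le_div_iff₀ (by positivity) (by norm_num)]
      nlinarith
    have htρ23 : tρ ≤ 2/3 := by linarith
    have hFtρ : Flow tρ = Real.exp (-(2*ρ)) / (3*π/2)^2 * (Real.sin x₀ - c * x₀) := by
      rw [Fsmall tρ htρ0 htρ23, hωt]
    have hsinpos : c * x₀ < Real.sin x₀ := by
      have htan := Real.lt_tan hx₀0 hx₀half
      rw [Real.tan_eq_sin_div_cos, hcos] at htan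
      calc c * x₀ < c * (Real.sin x₀ / c) := by
            exact mul_lt_mul_of_pos_left htan hc0
        _ = Real.sin x₀ := by field_simp
    have hpos : 0 < Flow tρ := by
      rw [hFtρ]
      apply mul_pos hK
      linarith
    refine ⟨hpos, ⟨htρ0, by linarith⟩, ?_⟩
    intro t ht
    rcases le_total t (2/3) with h23 | h23
    · rw [Fsmall t ht.1 h23, hFtρ]
      apply mul_le_mul_of_nonneg_left _ hK.le
      have hx : 3*π/2*t ∈ Set.Icc 0 π := ⟨by nlinarith [ht.1], by nlinarith⟩
      have hx₀mem : x₀ ∈ Set.Icc 0 π := ⟨hx₀0.le, Real.arccos_le_pi c⟩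
      have := sin_linear_max hx₀mem hx
      rw [hcos] at this
      linarith
    · exact (Fbig_neg t h23 ht.2).le.trans hpos.le
  · intro hρ2
    have hA2 : 2 ≤ A := by
      rw [hAdef, show (2:ℝ) = Real.exp (Real.log 2) by rw [Real.exp_log]; norm_num]
      exact Real.exp_le_exp.mpr (by linarith)
    intro t ht
    rcases le_total t (2/3) with h23 | h23
    · rw [Fsmall t ht.1 h23]
      apply mul_nonpos_of_nonneg_of_nonpos hK.le
      have hs : Real.sin (3*π/2*t) ≤ 3*π/2*t := Real.sin_le (by nlinarith [ht.1])
      have hxt : 0 ≤ 3*π/2*t := by nlinarith [ht.1]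
      have h1x : 1 * (3*π/2*t) ≤ (A - 1) * (3*π/2*t) :=
        mul_le_mul_of_nonneg_right (by linarith) hxt
      linarith
    · exact (Fbig_neg t h23 ht.2).le
end

section
/- Let k(t,s) := min{t,s} on [0,1]². For every ρ with 0 < ρ < (1/4)·ln 2, there exist λ_ρ⁺ > 0, λ_ρ⁻ < 0 and continuous functions u⁺, u⁻ : [0,1] → ℝ with ‖u⁺‖_∞ = ‖u⁻‖_∞ = ρ such that u^{±}(t) = λ_ρ^{±} ∫₀¹ k(t,s) · sin((3π/2)s) · e^{u^{±}(s)} / (∫₀¹ e^{u^{±}(x)} dx) ds for all t ∈ [0,1]. -/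
open MeasureTheory Set Real Function
open scoped NNReal
noncomputable section
namespace BVPaux





abbrev I01 : Set ℝ := Set.Icc (0:ℝ) 1
abbrev X : Type := C(I01, ℝ)

def φ (s : ℝ) : ℝ := Real.sin (3 * π / 2 * s)

def g (x : ℝ) : ℝ := Real.exp (min x 1)

@[fun_prop]
lemma φ_cont : Continuous φ := by
  unfold φ; fun_prop

lemma φ_abs_le (s : ℝ) : |φ s| ≤ 1 := Real.abs_sin_le_one _

lemma g_pos (x : ℝ) : 0 < g x := Real.exp_pos _

lemma g_le (x : ℝ) : g x ≤ Real.exp 1 :=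
  Real.exp_le_exp.2 (min_le_right _ _)

lemma g_cont : Continuous g := by
  unfold g; fun_prop

lemma exp_key : ∀ a b : ℝ, a ≤ b → b ≤ 1 → Real.exp b - Real.exp a ≤ Real.exp 1 * (b - a) := by
  intro a b hab hb1
  have h1 : a - b + 1 ≤ Real.exp (a - b) := Real.add_one_le_exp _
  have h2 : Real.exp b * (a - b + 1) ≤ Real.exp b * Real.exp (a - b) := by
    apply mul_le_mul_of_nonneg_left h1 (Real.exp_pos b).le
  rw [← Real.exp_add, add_sub_cancel] at h2
  have h4 : Real.exp b ≤ Real.exp 1 := Real.exp_le_exp.2 hb1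
  nlinarith [Real.exp_pos b]

lemma g_lip (x y : ℝ) : |g x - g y| ≤ Real.exp 1 * |x - y| := by
  have hmin : |min x 1 - min y 1| ≤ |x - y| := by
    rcases le_total x 1 with h1 | h1 <;> rcases le_total y 1 with h2 | h2 <;>
      rw [abs_le] <;>
      simp only [min_eq_left h1, min_eq_right h1, min_eq_left h2, min_eq_right h2] <;>
      constructor <;> linarith [le_abs_self (x - y), neg_abs_le (x - y)]
  unfold g
  rcases le_total (min x 1) (min y 1) with h | h
  · rw [abs_sub_comm, abs_of_nonneg (by simp [Real.exp_le_exp, h])]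
    calc Real.exp (min y 1) - Real.exp (min x 1) ≤ Real.exp 1 * (min y 1 - min x 1) :=
        exp_key _ _ h (min_le_right _ _)
      _ ≤ Real.exp 1 * |x - y| := by
        apply mul_le_mul_of_nonneg_left _ (Real.exp_pos 1).le
        calc min y 1 - min x 1 ≤ |min x 1 - min y 1| := by
              rw [abs_sub_comm]; exact le_abs_self _
          _ ≤ |x - y| := hmin
  · rw [abs_of_nonneg (by simp [Real.exp_le_exp, h])]
    calc Real.exp (min x 1) - Real.exp (min y 1) ≤ Real.exp 1 * (min x 1 - min y 1) :=
        exp_key _ _ h (min_le_right _ _)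
      _ ≤ Real.exp 1 * |x - y| := by
        apply mul_le_mul_of_nonneg_left _ (Real.exp_pos 1).le
        exact le_trans (le_abs_self _) hmin

def pr (s : ℝ) : I01 := Set.projIcc 0 1 zero_le_one s

lemma pr_cont : Continuous pr := continuous_projIcc (h := zero_le_one)

lemma pr_val {s : ℝ} (h0 : 0 ≤ s) (h1 : s ≤ 1) : ((pr s : I01) : ℝ) = s := by
  simp [pr, Set.projIcc_of_mem, Set.mem_Icc.2 ⟨h0, h1⟩]

def q (U : X) (s : ℝ) : ℝ := φ s * g (U (pr s))

@[fun_prop]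
lemma q_cont (U : X) : Continuous (q U) :=
  φ_cont.mul (g_cont.comp (U.continuous.comp pr_cont))

-- the operator
def Araw (ν : ℝ) (U : X) (t : ℝ) : ℝ := -ν * ∫ s in t..1, (s - t) * q U s

lemma Araw_cont (ν : ℝ) (U : X) : Continuous (Araw ν U) := by
  have h1 : Continuous fun t : ℝ => ∫ s in (0:ℝ)..t, s * q U s :=
    intervalIntegral.continuous_primitive
      (fun a b => (((by fun_prop : Continuous fun s : ℝ => s * q U s)).intervalIntegrable a b)) 0
  have h2 : Continuous fun t : ℝ => ∫ s in (0:ℝ)..t, q U s :=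
    intervalIntegral.continuous_primitive (fun a b => ((q_cont U).intervalIntegrable a b)) 0
  have key : ∀ t : ℝ, Araw ν U t =
      -ν * (((∫ s in (0:ℝ)..1, s * q U s) - ∫ s in (0:ℝ)..t, s * q U s)
        - t * ((∫ s in (0:ℝ)..1, q U s) - ∫ s in (0:ℝ)..t, q U s)) := by
    intro t
    unfold Araw
    congr 1
    have hsub : ∀ a b : ℝ, (∫ s in a..b, (s - t) * q U s)
        = (∫ s in a..b, s * q U s) - t * ∫ s in a..b, q U s := by
      intro a b
      have e1 : IntervalIntegrable (fun s : ℝ => s * q U s) volume a b :=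
        ((by fun_prop : Continuous fun s : ℝ => s * q U s)).intervalIntegrable a b
      have e2 : IntervalIntegrable (fun s : ℝ => t * q U s) volume a b :=
        (continuous_const.mul (q_cont U)).intervalIntegrable a b
      have : (∫ s in a..b, (s - t) * q U s) = ∫ s in a..b, (s * q U s - t * q U s) := by
        apply intervalIntegral.integral_congr; intro s _; ring
      rw [this, intervalIntegral.integral_sub e1 e2, intervalIntegral.integral_const_mul]
    have hsplit1 : (∫ s in (0:ℝ)..1, s * q U s)
        = (∫ s in (0:ℝ)..t, s * q U s) + ∫ s in t..1, s * q U s :=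
      (intervalIntegral.integral_add_adjacent_intervals
        (((by fun_prop : Continuous fun s : ℝ => s * q U s)).intervalIntegrable 0 t)
        (((by fun_prop : Continuous fun s : ℝ => s * q U s)).intervalIntegrable t 1)).symm
    have hsplit2 : (∫ s in (0:ℝ)..1, q U s)
        = (∫ s in (0:ℝ)..t, q U s) + ∫ s in t..1, q U s :=
      (intervalIntegral.integral_add_adjacent_intervals
        ((q_cont U).intervalIntegrable 0 t) ((q_cont U).intervalIntegrable t 1)).symm
    rw [hsub t 1, hsplit1, hsplit2]
    ring
  have : Continuous fun t => -ν * (((∫ s in (0:ℝ)..1, s * q U s) - ∫ s in (0:ℝ)..t, s * q U s)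
        - t * ((∫ s in (0:ℝ)..1, q U s) - ∫ s in (0:ℝ)..t, q U s)) := by
    fun_prop
  exact (continuous_congr fun t => (key t).symm).1 this

def A (ν : ℝ) (U : X) : X := ⟨fun t => Araw ν U t, (Araw_cont ν U).comp continuous_subtype_val⟩

lemma A_apply (ν : ℝ) (U : X) (t : I01) :
    A ν U t = -ν * ∫ s in (t:ℝ)..1, (s - t) * q U s := rfl

lemma beta_int (t : ℝ) (m : ℕ) :
    ∫ s in t..1, (s - t) * (1 - s)^m
      = (1 - t)^(m + 2) / ((m + 1) * (m + 2)) := by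
  have hpow : ∀ n : ℕ, (∫ s in t..1, (1 - s)^n) = (1 - t)^(n+1) / (n+1) := by
    intro n
    have := intervalIntegral.integral_comp_sub_left (fun x : ℝ => x ^ n) 1 (a := t) (b := 1)
    simp only [sub_self] at this
    rw [this, integral_pow]
    simp
  have e1 : IntervalIntegrable (fun s : ℝ => (1-t) * (1 - s)^m) volume t 1 :=
    ((by fun_prop : Continuous fun s : ℝ => (1-t) * (1 - s)^m)).intervalIntegrable t 1
  have e2 : IntervalIntegrable (fun s : ℝ => (1 - s)^(m+1)) volume t 1 :=
    ((by fun_prop : Continuous fun s : ℝ => (1 - s)^(m+1))).intervalIntegrable t 1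
  have : (∫ s in t..1, (s - t) * (1 - s)^m)
      = ∫ s in t..1, ((1-t) * (1 - s)^m - (1 - s)^(m+1)) := by
    apply intervalIntegral.integral_congr; intro s _; ring
  rw [this, intervalIntegral.integral_sub e1 e2, intervalIntegral.integral_const_mul,
    hpow m, hpow (m+1)]
  have h1 : (m:ℝ) + 1 ≠ 0 := by positivity
  have h2 : (m:ℝ) + 2 ≠ 0 := by positivity
  push_cast
  field_simp
  ring


lemma step (ν : ℝ) (hν : |ν| ≤ 12) (W W' : X) (C : ℝ) (hC : 0 ≤ C) (m : ℕ)
    (hb : ∀ x : I01, |W x - W' x| ≤ C * (1 - (x:ℝ))^m) (t : I01) :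
    |A ν W t - A ν W' t| ≤
      12 * Real.exp 1 * C * (1 - (t:ℝ))^(m+2) / ((m+1)*(m+2)) := by
  obtain ⟨t, ht0, ht1⟩ := t
  simp only [A_apply]
  have hint : ∀ (V : X), IntervalIntegrable (fun s => (s - t) * q V s) volume t 1 :=
    fun V => ((by fun_prop : Continuous fun s : ℝ => (s - t) * q V s)).intervalIntegrable t 1
  have hdiff : -ν * (∫ s in (t:ℝ)..1, (s - t) * q W s)
      - -ν * (∫ s in (t:ℝ)..1, (s - t) * q W' s)
      = -ν * ∫ s in (t:ℝ)..1, ((s - t) * q W s - (s - t) * q W' s) := by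
    rw [intervalIntegral.integral_sub (hint W) (hint W')]; ring
  rw [hdiff, abs_mul, abs_neg]
  have key : |∫ s in (t:ℝ)..1, ((s - t) * q W s - (s - t) * q W' s)|
      ≤ Real.exp 1 * C * ((1 - t)^(m+2) / ((m+1)*(m+2))) := by
    have h1 : |∫ s in (t:ℝ)..1, ((s - t) * q W s - (s - t) * q W' s)|
        ≤ ∫ s in (t:ℝ)..1, |(s - t) * q W s - (s - t) * q W' s| :=
      intervalIntegral.abs_integral_le_integral_abs ht1
    have h2 : (∫ s in (t:ℝ)..1, |(s - t) * q W s - (s - t) * q W' s|)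
        ≤ ∫ s in (t:ℝ)..1, Real.exp 1 * C * ((s - t) * (1 - s)^m) := by
      apply intervalIntegral.integral_mono_on ht1
      · exact (((hint W).sub (hint W')).abs)
      · exact ((by fun_prop : Continuous fun s : ℝ =>
          Real.exp 1 * C * ((s - t) * (1 - s)^m)).intervalIntegrable t 1)
      · intro s hs
        obtain ⟨hs0, hs1⟩ := hs
        have hst : 0 ≤ s - t := by linarith
        have hprs : ((pr s : I01) : ℝ) = s := pr_val (by linarith) hs1
        have : (s - t) * q W s - (s - t) * q W' s = (s - t) * (φ s * (g (W (pr s)) - g (W' (pr s)))) := by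
          unfold q; ring
        rw [this, abs_mul, abs_of_nonneg hst, abs_mul]
        have hg : |g (W (pr s)) - g (W' (pr s))| ≤ Real.exp 1 * (C * (1 - s)^m) := by
          calc |g (W (pr s)) - g (W' (pr s))| ≤ Real.exp 1 * |W (pr s) - W' (pr s)| :=
              g_lip _ _
            _ ≤ Real.exp 1 * (C * (1 - s)^m) := by
              apply mul_le_mul_of_nonneg_left _ (Real.exp_pos 1).le
              simpa [hprs] using hb (pr s)
        calc (s - t) * (|φ s| * |g (W (pr s)) - g (W' (pr s))|)
            ≤ (s - t) * (1 * (Real.exp 1 * (C * (1 - s)^m))) := by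
              apply mul_le_mul_of_nonneg_left _ hst
              apply mul_le_mul (φ_abs_le s) hg (abs_nonneg _)
              norm_num
          _ = Real.exp 1 * C * ((s - t) * (1 - s)^m) := by ring
    have h3 : (∫ s in (t:ℝ)..1, Real.exp 1 * C * ((s - t) * (1 - s)^m))
        = Real.exp 1 * C * ((1 - t)^(m+2) / ((m+1)*(m+2))) := by
      rw [intervalIntegral.integral_const_mul, beta_int]
    linarith [h1, h2, h3.le, h3.ge]
  calc |ν| * |∫ s in (t:ℝ)..1, ((s - t) * q W s - (s - t) * q W' s)|
      ≤ 12 * (Real.exp 1 * C * ((1 - t)^(m+2) / ((m+1)*(m+2)))) := by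
        apply mul_le_mul hν key (abs_nonneg _) (by norm_num)
    _ = 12 * Real.exp 1 * C * (1 - t)^(m+2) / ((m+1)*(m+2)) := by ring


lemma iter_bound (ν : ℝ) (hν : |ν| ≤ 12) (k : ℕ) (U V : X) (t : I01) :
    |((A ν)^[k] U) t - ((A ν)^[k] V) t|
      ≤ (12 * Real.exp 1)^k * (1 - (t:ℝ))^(2*k) / (Nat.factorial (2*k)) * dist U V := by
  induction k generalizing t with
  | zero =>
    simpa using ContinuousMap.dist_apply_le_dist (f := U) (g := V) t |>.trans_eq' (by
      rw [Real.dist_eq])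
  | succ k ih =>
    have hC : (0:ℝ) ≤ (12 * Real.exp 1)^k / (Nat.factorial (2*k)) * dist U V := by
      positivity
    have hb : ∀ x : I01, |((A ν)^[k] U) x - ((A ν)^[k] V) x|
        ≤ ((12 * Real.exp 1)^k / (Nat.factorial (2*k)) * dist U V) * (1 - (x:ℝ))^(2*k) := by
      intro x
      calc _ ≤ (12 * Real.exp 1)^k * (1 - (x:ℝ))^(2*k) / (Nat.factorial (2*k)) * dist U V :=
            ih x
        _ = ((12 * Real.exp 1)^k / (Nat.factorial (2*k)) * dist U V) * (1 - (x:ℝ))^(2*k) := by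
            ring
    have hstep := step ν hν ((A ν)^[k] U) ((A ν)^[k] V)
      ((12 * Real.exp 1)^k / (Nat.factorial (2*k)) * dist U V) hC (2*k) hb t
    rw [Function.iterate_succ_apply', Function.iterate_succ_apply']
    refine hstep.trans (le_of_eq ?_)
    have hfac : (Nat.factorial (2*(k+1)) : ℝ)
        = (Nat.factorial (2*k)) * ((2*k:ℕ)+1) * ((2*k:ℕ)+2) := by
      have : 2*(k+1) = (2*k+1)+1 := by ring
      rw [this, Nat.factorial_succ, Nat.factorial_succ]
      push_cast
      ring
    have h1 : ((2*k:ℕ):ℝ)+1 ≠ 0 := by positivity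
    have h2 : ((2*k:ℕ):ℝ)+2 ≠ 0 := by positivity
    have h3 : ((Nat.factorial (2*k)):ℝ) ≠ 0 := by
      exact_mod_cast (Nat.factorial_pos (2*k)).ne'
    rw [hfac]
    have : 2*(k+1) = 2*k+2 := by ring
    rw [this]
    push_cast
    field_simp
    ring


lemma numeric8 : (12 * Real.exp 1)^8 / (Nat.factorial 16) ≤ 1/2 := by
  have he : Real.exp 1 < 2.7182818286 := Real.exp_one_lt_d9
  have h0 : (0:ℝ) ≤ 12 * Real.exp 1 := by positivity
  have h1 : (12 * Real.exp 1)^8 ≤ (12 * 2.7182818286)^8 := by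
    apply pow_le_pow_left₀ h0 (by linarith)
  have h2 : (Nat.factorial 16 : ℝ) = 20922789888000 := by
    norm_num [Nat.factorial]
  rw [h2]
  rw [div_le_iff₀ (by norm_num)]
  calc (12 * Real.exp 1)^8 ≤ (12 * 2.7182818286)^8 := h1
    _ ≤ 1/2 * 20922789888000 := by norm_num

lemma contraction (ν : ℝ) (hν : |ν| ≤ 12) : ContractingWith (1/2 : ℝ≥0) ((A ν)^[8]) := by
  constructor
  · rw [← NNReal.coe_lt_coe]; norm_num
  · apply LipschitzWith.of_dist_le_mul
    intro U V
    have hd : (0:ℝ) ≤ ((1/2 : ℝ≥0) : ℝ) * dist U V := by positivity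
    rw [ContinuousMap.dist_le hd]
    intro t
    rw [Real.dist_eq]
    calc |((A ν)^[8] U) t - ((A ν)^[8] V) t|
        ≤ (12 * Real.exp 1)^8 * (1 - (t:ℝ))^(2*8) / (Nat.factorial (2*8)) * dist U V :=
          iter_bound ν hν 8 U V t
      _ ≤ (12 * Real.exp 1)^8 * 1 / (Nat.factorial 16) * dist U V := by
          have h16 : (2*8) = 16 := by norm_num
          rw [h16]
          have ht : (1 - (t:ℝ))^16 ≤ 1 := by
            apply pow_le_one₀ (by linarith [t.2.2]) (by linarith [t.2.1])
          gcongr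
      _ = (12 * Real.exp 1)^8 / (Nat.factorial 16) * dist U V := by ring
      _ ≤ 1/2 * dist U V := mul_le_mul_of_nonneg_right numeric8 dist_nonneg
      _ = ((1/2 : ℝ≥0) : ℝ) * dist U V := by push_cast; ring


lemma e_lt : Real.exp 1 < 2.7182818286 := Real.exp_one_lt_d9

lemma q_abs_le (U : X) (s : ℝ) : |q U s| ≤ Real.exp 1 := by
  unfold q
  rw [abs_mul]
  have h1 : |g (U (pr s))| ≤ Real.exp 1 := by
    rw [abs_of_pos (g_pos _)]; exact g_le _
  calc |φ s| * |g (U (pr s))| ≤ 1 * Real.exp 1 :=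
      mul_le_mul (φ_abs_le s) h1 (abs_nonneg _) (by norm_num)
    _ = Real.exp 1 := one_mul _

lemma A_lip (ν : ℝ) (hν : |ν| ≤ 12) (U V : X) : dist (A ν U) (A ν V) ≤ 17 * dist U V := by
  have hd : (0:ℝ) ≤ 17 * dist U V := by positivity
  rw [ContinuousMap.dist_le hd]
  intro t
  rw [Real.dist_eq]
  have hb : ∀ x : I01, |U x - V x| ≤ (dist U V) * (1 - (x:ℝ))^0 := by
    intro x
    simpa [Real.dist_eq] using ContinuousMap.dist_apply_le_dist (f := U) (g := V) x
  have h := step ν hν U V (dist U V) dist_nonneg 0 hb t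
  norm_num at h
  have ht : (1 - (t:ℝ))^2 ≤ 1 :=
    pow_le_one₀ (by linarith [t.2.2]) (by linarith [t.2.1])
  have ht0 : (0:ℝ) ≤ (1 - (t:ℝ))^2 := sq_nonneg _
  have he := e_lt
  have hd0 : (0:ℝ) ≤ dist U V := dist_nonneg
  nlinarith [mul_nonneg hd0 (sub_nonneg.2 ht), Real.exp_pos 1,
    mul_le_mul_of_nonneg_left ht (mul_nonneg (by positivity : (0:ℝ) ≤ 12 * Real.exp 1) hd0)]

lemma A_param (ν μ : ℝ) (U : X) : dist (A ν U) (A μ U) ≤ 2 * |ν - μ| := by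
  have hd : (0:ℝ) ≤ 2 * |ν - μ| := by positivity
  rw [ContinuousMap.dist_le hd]
  intro tt
  obtain ⟨t, ht0, ht1⟩ := tt
  rw [Real.dist_eq]
  have heq : A ν U ⟨t, ht0, ht1⟩ - A μ U ⟨t, ht0, ht1⟩
      = (μ - ν) * ∫ s in t..1, (s - t) * q U s := by
    simp only [A_apply]; ring
  rw [heq, abs_mul]
  have key : |∫ s in t..1, (s - t) * q U s| ≤ Real.exp 1 * ((1 - t)^(0+2) / ((0+1)*(0+2))) := by
    have h1 : |∫ s in t..1, (s - t) * q U s| ≤ ∫ s in t..1, |(s - t) * q U s| :=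
      intervalIntegral.abs_integral_le_integral_abs ht1
    have h2 : (∫ s in t..1, |(s - t) * q U s|)
        ≤ ∫ s in t..1, Real.exp 1 * ((s - t) * (1 - s)^0) := by
      apply intervalIntegral.integral_mono_on ht1
      · exact (((by fun_prop : Continuous fun s : ℝ => (s - t) * q U s)).intervalIntegrable
          t 1).abs
      · exact ((by fun_prop : Continuous fun s : ℝ =>
          Real.exp 1 * ((s - t) * (1 - s)^0)).intervalIntegrable t 1)
      · intro s hs
        rw [abs_mul, abs_of_nonneg (by linarith [hs.1] : (0:ℝ) ≤ s - t)]
        simp only [pow_zero, mul_one]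
        rw [mul_comm (Real.exp 1) (s - t)]
        exact mul_le_mul_of_nonneg_left (q_abs_le U s) (by linarith [hs.1])
    have h3 : (∫ s in t..1, Real.exp 1 * ((s - t) * (1 - s)^0))
        = Real.exp 1 * ((1 - t)^(0+2) / ((0+1)*(0+2))) := by
      rw [intervalIntegral.integral_const_mul, beta_int]
      norm_num
    linarith
  norm_num at key
  have ht : (1 - t)^2 ≤ 1 := pow_le_one₀ (by linarith) (by linarith)
  have he := e_lt
  have habs : (0:ℝ) ≤ |μ - ν| := abs_nonneg _
  have hb2 : Real.exp 1 * ((1 - t)^2 / 2) ≤ 2 := by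
    nlinarith [Real.exp_pos 1, sq_nonneg (1 - t)]
  calc |μ - ν| * |∫ s in t..1, (s - t) * q U s|
      ≤ |μ - ν| * 2 := by
        apply mul_le_mul_of_nonneg_left (key.trans hb2) habs
    _ = 2 * |ν - μ| := by rw [abs_sub_comm]; ring

lemma iterate_param (ν μ : ℝ) (hν : |ν| ≤ 12) (k : ℕ) (W : X) :
    dist ((A ν)^[k] W) ((A μ)^[k] W) ≤ 19^k * |ν - μ| := by
  induction k generalizing W with
  | zero => simp [abs_nonneg]
  | succ k ih =>
    rw [Function.iterate_succ_apply', Function.iterate_succ_apply']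
    have h19 : (1:ℝ) ≤ 19^k := one_le_pow₀ (by norm_num)
    have h2 : |ν - μ| ≤ 19^k * |ν - μ| := le_mul_of_one_le_left (abs_nonneg _) h19
    calc dist (A ν ((A ν)^[k] W)) (A μ ((A μ)^[k] W))
        ≤ dist (A ν ((A ν)^[k] W)) (A ν ((A μ)^[k] W))
          + dist (A ν ((A μ)^[k] W)) (A μ ((A μ)^[k] W)) := dist_triangle _ _ _
      _ ≤ 17 * dist ((A ν)^[k] W) ((A μ)^[k] W) + 2 * |ν - μ| := by
          gcongr
          · exact A_lip ν hν _ _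
          · exact A_param ν μ _
      _ ≤ 17 * (19^k * |ν - μ|) + 2 * |ν - μ| := by
          gcongr
          exact ih W
      _ ≤ 19^(k+1) * |ν - μ| := by
          rw [pow_succ]
          nlinarith


lemma contraction' (ν : ℝ) (hν : |ν| ≤ 12) : ContractingWith (1/2 : NNReal) ((A ν)^[8]) :=
  contraction ν hν

def sol (ν : ℝ) : X :=
  if h : |ν| ≤ 12 then ContractingWith.fixedPoint ((A ν)^[8]) (contraction' ν h) else 0

lemma sol_fix8 {ν : ℝ} (h : |ν| ≤ 12) : ((A ν)^[8]) (sol ν) = sol ν := by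
  unfold sol
  rw [dif_pos h]
  exact (contraction' ν h).fixedPoint_isFixedPt

lemma sol_fix {ν : ℝ} (h : |ν| ≤ 12) : A ν (sol ν) = sol ν := by
  unfold sol
  rw [dif_pos h]
  exact ContractingWith.isFixedPt_fixedPoint_iterate (contraction' ν h)

lemma sol_param {ν μ : ℝ} (hν : |ν| ≤ 12) (hμ : |μ| ≤ 12) :
    dist (sol ν) (sol μ) ≤ 2 * (19^8 * |ν - μ|) := by
  have hx : Function.IsFixedPt ((A ν)^[8]) (sol ν) := sol_fix8 hν
  have hy : Function.IsFixedPt ((A μ)^[8]) (sol μ) := sol_fix8 hμ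
  have hfg : ∀ z : X, dist (((A ν)^[8]) z) (((A μ)^[8]) z) ≤ 19^8 * |ν - μ| :=
    fun z => iterate_param ν μ hν 8 z
  have := (contraction' ν hν).dist_fixedPoint_fixedPoint_of_dist_le' ((A μ)^[8]) hx hy hfg
  calc dist (sol ν) (sol μ) ≤ (19^8 * |ν - μ|) / (1 - ((1/2 : NNReal) : ℝ)) := this
    _ = 2 * (19^8 * |ν - μ|) := by push_cast; ring

def c0 : I01 := ⟨0, by norm_num⟩
def c1 : I01 := ⟨1, by norm_num⟩
def c23 : I01 := ⟨2/3, by norm_num⟩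

def vν (ν : ℝ) : X := sol ν - ContinuousMap.const I01 (sol ν c0)

lemma vν_apply (ν : ℝ) (t : I01) : vν ν t = sol ν t - sol ν c0 := rfl

lemma sol_cont : ContinuousOn sol (Set.Icc (-12:ℝ) 12) := by
  intro ν hν
  apply ContinuousWithinAt.mono (s := Set.Icc (-12:ℝ) 12) _ (le_refl _)
  rw [Metric.continuousWithinAt_iff]
  intro ε hε
  refine ⟨ε / (2 * 19^8 + 1), by positivity, fun μ hμ hd => ?_⟩
  have hν' : |ν| ≤ 12 := abs_le.2 ⟨(Set.mem_Icc.1 hν).1, (Set.mem_Icc.1 hν).2⟩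
  have hμ' : |μ| ≤ 12 := abs_le.2 ⟨(Set.mem_Icc.1 hμ).1, (Set.mem_Icc.1 hμ).2⟩
  have h1 := sol_param hμ' hν'
  have h2 : |μ - ν| < ε / (2 * 19^8 + 1) := by
    rw [Real.dist_eq] at hd; exact hd
  calc dist (sol μ) (sol ν) ≤ 2 * (19^8 * |μ - ν|) := h1
    _ < ε := by
      have hpow : (0:ℝ) < 2 * 19^8 + 1 := by positivity
      rw [lt_div_iff₀ hpow] at h2
      nlinarith [abs_nonneg (μ - ν)]


lemma intInt (f : ℝ → ℝ) (hf : Continuous f) (a b : ℝ) :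
    IntervalIntegrable f volume a b := hf.intervalIntegrable a b

lemma Amin (ν : ℝ) (U : X) (t : I01) :
    A ν U t - A ν U c0 = ν * ∫ s in (0:ℝ)..1, min (t:ℝ) s * q U s := by
  obtain ⟨t, ht0, ht1⟩ := t
  have hq := q_cont U
  have hsq : Continuous fun s : ℝ => s * q U s := by fun_prop
  have hminq : Continuous fun s : ℝ => min t s * q U s := by
    exact (continuous_const.min continuous_id).mul hq
  simp only [A_apply, c0]
  have e0 : (∫ s in (0:ℝ)..1, (s - 0) * q U s) = ∫ s in (0:ℝ)..1, s * q U s := by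
    apply intervalIntegral.integral_congr; intro s _; ring
  have split1 : (∫ s in (0:ℝ)..1, s * q U s)
      = (∫ s in (0:ℝ)..t, s * q U s) + ∫ s in t..1, s * q U s :=
    (intervalIntegral.integral_add_adjacent_intervals
      (intInt _ hsq 0 t) (intInt _ hsq t 1)).symm
  have splitm : (∫ s in (0:ℝ)..1, min t s * q U s)
      = (∫ s in (0:ℝ)..t, min t s * q U s) + ∫ s in t..1, min t s * q U s :=
    (intervalIntegral.integral_add_adjacent_intervals
      (intInt _ hminq 0 t) (intInt _ hminq t 1)).symm
  have m1 : (∫ s in (0:ℝ)..t, min t s * q U s) = ∫ s in (0:ℝ)..t, s * q U s := by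
    apply intervalIntegral.integral_congr
    intro s hs
    rw [Set.uIcc_of_le ht0] at hs
    simp only []
    rw [min_eq_right hs.2]
  have m2 : (∫ s in t..1, min t s * q U s) = ∫ s in t..1, t * q U s := by
    apply intervalIntegral.integral_congr
    intro s hs
    rw [Set.uIcc_of_le ht1] at hs
    simp only []
    rw [min_eq_left hs.1]
  have sub1 : (∫ s in t..1, (s - t) * q U s)
      = (∫ s in t..1, s * q U s) - ∫ s in t..1, t * q U s := by
    have : (∫ s in t..1, (s - t) * q U s) = ∫ s in t..1, (s * q U s - t * q U s) := by
      apply intervalIntegral.integral_congr; intro s _; ring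
    rw [this, intervalIntegral.integral_sub (intInt _ hsq t 1)
      (intInt (fun s => t * q U s) (continuous_const.mul hq) t 1)]
  rw [e0, splitm, m1, m2, sub1, split1]
  ring

lemma sol_c1 {ν : ℝ} (h : |ν| ≤ 12) : sol ν c1 = 0 := by
  conv_lhs => rw [← sol_fix h]
  rw [A_apply]
  simp [c1]

lemma vν_rep {ν : ℝ} (h : |ν| ≤ 12) (t : I01) :
    vν ν t = ν * ∫ s in (0:ℝ)..1, min (t:ℝ) s * q (sol ν) s := by
  rw [vν_apply]
  conv_lhs => rw [← sol_fix h]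
  exact Amin ν (sol ν) t

lemma A_zero (U : X) : A 0 U = 0 := by
  ext t
  rw [A_apply]
  simp

lemma sol_zero : sol 0 = 0 := by
  have h : |(0:ℝ)| ≤ 12 := by norm_num
  rw [← sol_fix h, A_zero]


lemma C0_int : (∫ s in (2/3:ℝ)..1, (s - 2/3) * φ s) = -(4/(9*π^2)) := by
  have hπ : (0:ℝ) < π := Real.pi_pos
  set a : ℝ := 3 * π / 2 with ha
  have ha0 : a ≠ 0 := by positivity
  have hF : ∀ s : ℝ, HasDerivAt
      (fun s : ℝ => -((s - 2/3) * Real.cos (a * s)) / a + Real.sin (a * s) / a^2)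
      ((s - 2/3) * Real.sin (a * s)) s := by
    intro s
    have hlin : HasDerivAt (fun s : ℝ => a * s) a s := by
      simpa using (hasDerivAt_id s).const_mul a
    have hcos : HasDerivAt (fun s : ℝ => Real.cos (a * s)) (-Real.sin (a * s) * a) s :=
      hlin.cos
    have hsin : HasDerivAt (fun s : ℝ => Real.sin (a * s)) (Real.cos (a * s) * a) s :=
      hlin.sin
    have hid : HasDerivAt (fun s : ℝ => s - 2/3) 1 s := (hasDerivAt_id s).sub_const _
    have hmul : HasDerivAt (fun s : ℝ => (s - 2/3) * Real.cos (a * s))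
        (1 * Real.cos (a * s) + (s - 2/3) * (-Real.sin (a * s) * a)) s := hid.mul hcos
    have h1 : HasDerivAt (fun s : ℝ => -((s - 2/3) * Real.cos (a * s)) / a)
        (-(1 * Real.cos (a * s) + (s - 2/3) * (-Real.sin (a * s) * a)) / a) s :=
      hmul.neg.div_const a
    have h2 : HasDerivAt (fun s : ℝ => Real.sin (a * s) / a^2)
        ((Real.cos (a * s) * a) / a^2) s := hsin.div_const _
    have := h1.add h2
    refine this.congr_deriv ?_
    rw [div_add_div _ _ ha0 (pow_ne_zero 2 ha0), div_eq_iff (mul_ne_zero ha0 (pow_ne_zero 2 ha0))]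
    ring
  have hint : IntervalIntegrable (fun s : ℝ => (s - 2/3) * Real.sin (a * s)) volume (2/3) 1 := by
    apply Continuous.intervalIntegrable; fun_prop
  have key := intervalIntegral.integral_eq_sub_of_hasDerivAt
    (f := fun s : ℝ => -((s - 2/3) * Real.cos (a * s)) / a + Real.sin (a * s) / a^2)
    (fun x _ => hF x) hint
  have hφ : (∫ s in (2/3:ℝ)..1, (s - 2/3) * φ s)
      = ∫ s in (2/3:ℝ)..1, (s - 2/3) * Real.sin (a * s) := by
    apply intervalIntegral.integral_congr; intro s _
    simp only [φ, ha]
  have hval1 : a * 1 = π + π/2 := by rw [ha]; ring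
  have hval2 : a * (2/3 : ℝ) = π := by rw [ha]; ring
  have hsin1 : Real.sin (a * 1) = -1 := by
    rw [hval1, Real.sin_add]
    simp
  have hcos1 : Real.cos (a * 1) = 0 := by
    rw [hval1, Real.cos_add]
    simp
  have hsin2 : Real.sin (a * (2/3:ℝ)) = 0 := by rw [hval2]; simp
  have hcos2 : Real.cos (a * (2/3:ℝ)) = -1 := by rw [hval2]; simp
  rw [hφ, key]
  rw [hsin1, hcos1, hsin2, hcos2, ha]
  field_simp
  ring

lemma φ_nonpos {s : ℝ} (h1 : 2/3 ≤ s) (h2 : s ≤ 1) : φ s ≤ 0 := by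
  have hπ : (0:ℝ) < π := Real.pi_pos
  have : φ s = -Real.sin (3 * π / 2 * s - π) := by
    simp [φ, Real.sin_sub_pi]
  rw [this, neg_nonpos]
  apply Real.sin_nonneg_of_nonneg_of_le_pi
  · nlinarith
  · nlinarith


lemma gamma_lb : (0.707:ℝ) ≤ Real.exp (-(Real.log 2 / 2)) := by
  set γ := Real.exp (-(Real.log 2 / 2)) with hγ
  have hpos : 0 < γ := Real.exp_pos _
  have hsq : γ * γ = 1/2 := by
    rw [hγ, ← Real.exp_add]
    have : -(Real.log 2 / 2) + -(Real.log 2 / 2) = -Real.log 2 := by ring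
    rw [this, Real.exp_neg, Real.exp_log (by norm_num : (0:ℝ) < 2)]
    norm_num
  nlinarith

lemma reach {ν : ℝ} (hν : |ν| = 12) {ρ : ℝ} (hρ' : ρ < 1/4 * Real.log 2) :
    ρ ≤ ‖vν ν‖ := by
  by_contra hcon
  push_neg at hcon
  have hν12 : |ν| ≤ 12 := le_of_eq hν
  set U := sol ν with hU
  set v := vν ν with hv
  have hlog2 : (0:ℝ) < Real.log 2 := Real.log_pos (by norm_num)
  have hvt : ∀ t : I01, |v t| < ρ := by
    intro t
    have h1 : |v t| ≤ ‖v‖ := by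
      simpa [Real.norm_eq_abs] using ContinuousMap.norm_coe_le_norm v t
    linarith
  -- |U c0| < ρ
  have hvc1 : v c1 = -U c0 := by
    rw [hv, vν_apply, hU, sol_c1 hν12]
    ring
  have hUc0 : |U c0| < ρ := by
    have := hvt c1
    rw [hvc1, abs_neg] at this
    exact this
  -- pointwise bound on U
  have hUt : ∀ t : I01, |U t| < 2 * ρ := by
    intro t
    have h1 := hvt t
    rw [hv, vν_apply] at h1
    have h2 : |U t| ≤ |U t - U c0| + |U c0| := by
      have h3 := abs_add_le (U t - U c0) (U c0)
      have h4 : U t - U c0 + U c0 = U t := by ring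
      rw [h4] at h3
      exact h3
    simp only [← hU] at h1
    linarith
  -- g lower bound on U values
  set γ := Real.exp (-(Real.log 2 / 2)) with hγ
  have hρ2 : 2 * ρ < Real.log 2 / 2 := by linarith
  have hglb : ∀ s : ℝ, γ ≤ g (U (pr s)) := by
    intro s
    rw [hγ]
    unfold g
    apply Real.exp_le_exp.2
    have h1 := hUt (pr s)
    have h2 : -(Real.log 2 / 2) ≤ U (pr s) := by
      cases abs_lt.1 h1 with
      | intro hl hr => linarith
    exact le_min h2 (by linarith [Real.log_pos (by norm_num : (1:ℝ) < 2)])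
  -- the integral estimate
  have hI : (∫ s in (2/3:ℝ)..1, (s - 2/3) * q U s) ≤ γ * (-(4/(9*π^2))) := by
    have hmono : (∫ s in (2/3:ℝ)..1, (s - 2/3) * q U s)
        ≤ ∫ s in (2/3:ℝ)..1, γ * ((s - 2/3) * φ s) := by
      apply intervalIntegral.integral_mono_on (by norm_num)
      · exact ((by fun_prop : Continuous fun s : ℝ => (s - 2/3) * q U s)).intervalIntegrable _ _
      · exact ((by fun_prop : Continuous fun s : ℝ =>
          γ * ((s - 2/3) * φ s)).intervalIntegrable _ _)
      · intro s hs
        have hs1 : (2/3:ℝ) ≤ s := hs.1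
        have hs2 : s ≤ 1 := hs.2
        have hφn : φ s ≤ 0 := φ_nonpos hs1 hs2
        have hst : (0:ℝ) ≤ s - 2/3 := by linarith
        have : φ s * g (U (pr s)) ≤ φ s * γ :=
          mul_le_mul_of_nonpos_left (hglb s) hφn
        unfold q
        nlinarith
    rw [intervalIntegral.integral_const_mul, C0_int] at hmono
    exact hmono
  -- v c1 - v c23 = ν * I
  have hrep : v c1 - v c23 = ν * ∫ s in (2/3:ℝ)..1, (s - 2/3) * q U s := by
    have h1 : v c1 - v c23 = U c1 - U c23 := by
      rw [hv, vν_apply, vν_apply]; ring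
    rw [h1, hU, sol_c1 hν12]
    have h2 : sol ν c23 = A ν (sol ν) c23 := by rw [sol_fix hν12]
    rw [h2, A_apply]
    have : ((c23 : I01) : ℝ) = 2/3 := rfl
    rw [this]
    ring
  -- contradiction
  have hγ07 : (0.707:ℝ) ≤ γ := gamma_lb
  have hπ : π < 3.1416 := by
    have := Real.pi_lt_d6
    linarith
  have hπ0 : (0:ℝ) < π := Real.pi_pos
  have hC0 : (0.0447:ℝ) ≤ 4/(9*π^2) := by
    rw [le_div_iff₀ (by positivity)]
    nlinarith
  have habs : |v c1 - v c23| < 2 * ρ := by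
    calc |v c1 - v c23| ≤ |v c1| + |v c23| := abs_sub _ _
      _ < 2 * ρ := by linarith [hvt c1, hvt c23]
  have hIneg : (∫ s in (2/3:ℝ)..1, (s - 2/3) * q U s) ≤ -(γ * (4/(9*π^2))) := by
    calc (∫ s in (2/3:ℝ)..1, (s - 2/3) * q U s) ≤ γ * (-(4/(9*π^2))) := hI
      _ = -(γ * (4/(9*π^2))) := by ring
  have hlow : 12 * (γ * (4/(9*π^2))) ≤ |v c1 - v c23| := by
    rw [hrep, abs_mul, hν]
    have h2 : γ * (4/(9*π^2)) ≤ |∫ s in (2/3:ℝ)..1, (s - 2/3) * q U s| := by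
      have hng : (∫ s in (2/3:ℝ)..1, (s - 2/3) * q U s) ≤ 0 := by
        have hγ0 : (0:ℝ) < γ := Real.exp_pos _
        have : (0:ℝ) ≤ γ * (4/(9*π^2)) := by positivity
        linarith
      rw [abs_of_nonpos hng]
      linarith
    nlinarith [abs_nonneg (∫ s in (2/3:ℝ)..1, (s - 2/3) * q U s)]
  have : 12 * (γ * (4/(9*π^2))) ≥ 12 * (0.707 * 0.0447) := by
    have hγ0 : (0:ℝ) < γ := Real.exp_pos _
    nlinarith
  have hlog : Real.log 2 < 0.6931471808 := Real.log_two_lt_d9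
  linarith [habs, hlow, this]


lemma vν_cont : ContinuousOn (fun ν => vν ν) (Set.Icc (-12:ℝ) 12) := by
  unfold vν
  apply ContinuousOn.sub sol_cont
  have h1 : ContinuousOn (fun ν => sol ν c0) (Set.Icc (-12:ℝ) 12) := by
    have : Continuous fun (f : X) => f c0 := continuous_eval_const c0
    exact this.comp_continuousOn sol_cont
  have h2 : Continuous fun (x : ℝ) => ContinuousMap.const I01 x := ContinuousMap.continuous_const'
  exact h2.comp_continuousOn h1

lemma norm_cont : ContinuousOn (fun ν => ‖vν ν‖) (Set.Icc (-12:ℝ) 12) :=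
  continuous_norm.comp_continuousOn vν_cont

lemma vν_zero : vν 0 = 0 := by
  unfold vν
  rw [sol_zero]
  ext t
  simp

lemma solves {ν ρ : ℝ} (hν12 : |ν| ≤ 12) (hρ' : ρ < 1/4 * Real.log 2)
    (hnorm : ‖vν ν‖ = ρ) (t : I01) :
    vν ν t = (ν * Real.exp (sol ν c0) * ∫ x in (0:ℝ)..1, Real.exp (vν ν (pr x))) *
      ∫ s in (0:ℝ)..1, min (t:ℝ) s *
        (φ s * Real.exp (vν ν (pr s)) / ∫ x in (0:ℝ)..1, Real.exp (vν ν (pr x))) := by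
  set U := sol ν with hU
  set v := vν ν with hv
  have hlog : Real.log 2 < 0.6931471808 := Real.log_two_lt_d9
  have hρ1 : 2 * ρ < 1 := by linarith
  have hvt : ∀ t : I01, |v t| ≤ ρ := by
    intro t
    rw [← hnorm]
    simpa [Real.norm_eq_abs] using ContinuousMap.norm_coe_le_norm v t
  have hvc1 : v c1 = -U c0 := by
    rw [hv, vν_apply, hU, sol_c1 hν12]; ring
  have hUc0 : |U c0| ≤ ρ := by
    have := hvt c1; rw [hvc1, abs_neg] at this; exact this
  have hUt : ∀ x : I01, |U x| < 1 := by
    intro x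
    have h1 := hvt x
    rw [hv, vν_apply] at h1
    have h2 : |U x| ≤ |U x - U c0| + |U c0| := by
      have h3 := abs_add_le (U x - U c0) (U c0)
      have h4 : U x - U c0 + U c0 = U x := by ring
      rw [h4] at h3; exact h3
    simp only [← hU] at h1
    linarith
  have hgU : ∀ s : ℝ, g (U (pr s)) = Real.exp (U c0) * Real.exp (v (pr s)) := by
    intro s
    have h1 : U (pr s) ≤ 1 := le_of_lt (abs_lt.1 (hUt (pr s))).2
    unfold g
    rw [min_eq_left h1, ← Real.exp_add]
    congr 1
    rw [hv, vν_apply, hU]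
    ring
  set D : ℝ := ∫ x in (0:ℝ)..1, Real.exp (v (pr x)) with hD
  have hDpos : 0 < D := by
    rw [hD]
    apply intervalIntegral.intervalIntegral_pos_of_pos
    · have hc : Continuous fun x : ℝ => Real.exp (v (pr x)) :=
        Real.continuous_exp.comp ((vν ν).continuous.comp pr_cont)
      exact hc.intervalIntegrable 0 1
    · intro x; exact Real.exp_pos _
    · norm_num
  have hrep := vν_rep hν12 t
  rw [← hv, ← hU] at hrep
  have hqeq : ∀ s : ℝ, q U s = φ s * (Real.exp (U c0) * Real.exp (v (pr s))) := by
    intro s; unfold q; rw [hgU s]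
  have hint_eq : (∫ s in (0:ℝ)..1, min (t:ℝ) s * (φ s * Real.exp (v (pr s)) / D))
      = (∫ s in (0:ℝ)..1, min (t:ℝ) s * (φ s * Real.exp (v (pr s)))) / D := by
    rw [← intervalIntegral.integral_div]
    apply intervalIntegral.integral_congr
    intro s _
    ring
  rw [hint_eq]
  have hqint : (∫ s in (0:ℝ)..1, min (t:ℝ) s * q U s)
      = Real.exp (U c0) * ∫ s in (0:ℝ)..1, min (t:ℝ) s * (φ s * Real.exp (v (pr s))) := by
    rw [← intervalIntegral.integral_const_mul]
    apply intervalIntegral.integral_congr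
    intro s _
    simp only []
    rw [hqeq s]
    ring
  rw [hrep, hqint]
  field_simp


lemma Dpos (ν : ℝ) : 0 < ∫ x in (0:ℝ)..1, Real.exp (vν ν (pr x)) := by
  apply intervalIntegral.intervalIntegral_pos_of_pos
  · have hc : Continuous fun x : ℝ => Real.exp (vν ν (pr x)) :=
      Real.continuous_exp.comp ((vν ν).continuous.comp pr_cont)
    exact hc.intervalIntegrable 0 1
  · intro x; exact Real.exp_pos _
  · norm_num

lemma exists_nu (ρ : ℝ) (hρ : 0 < ρ) (hρ' : ρ < 1/4 * Real.log 2) :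
    (∃ νp : ℝ, 0 < νp ∧ |νp| ≤ 12 ∧ ‖vν νp‖ = ρ) ∧
      (∃ νn : ℝ, νn < 0 ∧ |νn| ≤ 12 ∧ ‖vν νn‖ = ρ) := by
  have h0 : ‖vν 0‖ = 0 := by rw [vν_zero]; simp
  constructor
  · have hsub : Set.Icc (0:ℝ) 12 ⊆ Set.Icc (-12:ℝ) 12 := by
      intro x hx; exact ⟨by linarith [hx.1], hx.2⟩
    have hcont : ContinuousOn (fun ν => ‖vν ν‖) (Set.Icc (0:ℝ) 12) := norm_cont.mono hsub
    have h12 : ρ ≤ ‖vν 12‖ := reach (by norm_num) hρ'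
    have hmem : ρ ∈ Set.Icc (‖vν 0‖) (‖vν 12‖) := ⟨by rw [h0]; exact hρ.le, h12⟩
    obtain ⟨νp, hνp, hval⟩ := intermediate_value_Icc (by norm_num : (0:ℝ) ≤ 12) hcont hmem
    have hne : νp ≠ 0 := by
      intro h; rw [h] at hval; simp only [h0] at hval; exact hρ.ne hval
    exact ⟨νp, lt_of_le_of_ne hνp.1 (Ne.symm hne), abs_le.2 ⟨by linarith [hνp.1], hνp.2⟩, hval⟩
  · have hsub : Set.Icc (-12:ℝ) 0 ⊆ Set.Icc (-12:ℝ) 12 := by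
      intro x hx; exact ⟨hx.1, by linarith [hx.2]⟩
    have hcont : ContinuousOn (fun ν => ‖vν ν‖) (Set.Icc (-12:ℝ) 0) := norm_cont.mono hsub
    have h12 : ρ ≤ ‖vν (-12)‖ := reach (by norm_num) hρ'
    have hmem : ρ ∈ Set.Icc (‖vν 0‖) (‖vν (-12)‖) := ⟨by rw [h0]; exact hρ.le, h12⟩
    obtain ⟨νn, hνn, hval⟩ := intermediate_value_Icc' (by norm_num : (-12:ℝ) ≤ 0) hcont hmem
    have hne : νn ≠ 0 := by
      intro h; rw [h] at hval; simp only [h0] at hval; exact hρ.ne hval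
    exact ⟨νn, lt_of_le_of_ne hνn.2 hne, abs_le.2 ⟨hνn.1, by linarith [hνn.2]⟩, hval⟩

end BVPaux
end

open BVPaux in
/-- For every 0 < rho < (1/4) ln 2, the Hammerstein integral equation associated
with the mixed BVP has a positive and a negative eigenvalue with eigenfunctions
of sup-norm rho. -/
theorem mixed_bvp_eigenvalues
    (ρ : ℝ) (hρ : 0 < ρ) (hρ' : ρ < 1/4 * Real.log 2) :
    ∃ lamp lamn : ℝ, 0 < lamp ∧ lamn < 0 ∧
      ∃ up un : C(Set.Icc (0:ℝ) 1, ℝ), ‖up‖ = ρ ∧ ‖un‖ = ρ ∧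
        (∀ t : Set.Icc (0:ℝ) 1, up t = lamp *
          ∫ s in (0:ℝ)..1, min (t:ℝ) s *
            (Real.sin (3 * π / 2 * s) * Real.exp (up (Set.projIcc 0 1 zero_le_one s)) /
              ∫ x in (0:ℝ)..1, Real.exp (up (Set.projIcc 0 1 zero_le_one x)))) ∧
        (∀ t : Set.Icc (0:ℝ) 1, un t = lamn *
          ∫ s in (0:ℝ)..1, min (t:ℝ) s *
            (Real.sin (3 * π / 2 * s) * Real.exp (un (Set.projIcc 0 1 zero_le_one s)) /
              ∫ x in (0:ℝ)..1, Real.exp (un (Set.projIcc 0 1 zero_le_one x)))) := by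
  obtain ⟨⟨νp, hνp0, hνp12, hνpval⟩, ⟨νn, hνn0, hνn12, hνnval⟩⟩ := exists_nu ρ hρ hρ'
  have hDp := Dpos νp
  have hDn := Dpos νn
  refine ⟨νp * Real.exp (sol νp c0) * ∫ x in (0:ℝ)..1, Real.exp (vν νp (pr x)),
    νn * Real.exp (sol νn c0) * ∫ x in (0:ℝ)..1, Real.exp (vν νn (pr x)),
    by positivity, ?_, vν νp, vν νn, hνpval, hνnval, ?_, ?_⟩
  · apply mul_neg_of_neg_of_pos _ hDn
    exact mul_neg_of_neg_of_pos hνn0 (Real.exp_pos _)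
  · intro t
    exact solves hνp12 hρ' hνpval t
  · intro t
    exact solves hνn12 hρ' hνnval t
end

section
/- Let ρ > 0, let k be the Dirichlet Green's function k(t,s) = t(1−s) for t ≤ s and k(t,s) = s(1−t) for s ≤ t, and define F_low(t) := e^{−2ρ} ∫₀^{2/3} k(t,s) sin((3π/2)s) ds + e^{2ρ} ∫_{2/3}^{1} k(t,s) sin((3π/2)s) ds. Then F_low(1) = 0, F_low(2/3) = (4/(27π)) e^{−2ρ} + ((8 − 4π)/(27π²)) e^{2ρ}, and F_low(2/3) > 0 if and only if ρ < (1/4)·ln(π/(π−2)). -/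
open MeasureTheory Set Real

/-- For the Dirichlet Green's function, F_low(1) = 0,
F_low(2/3) = (4/(27 pi)) exp(-2 rho) + ((8 - 4 pi)/(27 pi^2)) exp(2 rho), and
F_low(2/3) > 0 iff rho < (1/4) ln(pi/(pi - 2)). -/
theorem dirichlet_Flow_values
    (ρ : ℝ) (hρ : 0 < ρ)
    (k : ℝ → ℝ → ℝ)
    (hk : ∀ t s : ℝ, k t s = if t ≤ s then t * (1 - s) else s * (1 - t))
    (Flow : ℝ → ℝ)
    (hFlow : ∀ t : ℝ, Flow t =
      Real.exp (-(2*ρ)) * (∫ s in (0:ℝ)..(2/3), k t s * Real.sin (3 * π / 2 * s)) +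
      Real.exp (2*ρ) * ∫ s in (2/3:ℝ)..1, k t s * Real.sin (3 * π / 2 * s)) :
    Flow 1 = 0 ∧
    Flow (2/3) = 4 / (27 * π) * Real.exp (-(2*ρ)) +
      (8 - 4 * π) / (27 * π ^ 2) * Real.exp (2*ρ) ∧
    (0 < Flow (2/3) ↔ ρ < 1/4 * Real.log (π / (π - 2))) := by
  have hπ : (0:ℝ) < π := Real.pi_pos
  have hπ2 : (2:ℝ) < π := by nlinarith [Real.pi_gt_three]
  have hc : (3*π/2 : ℝ) ≠ 0 := by positivity
  set c : ℝ := 3 * π / 2 with hc_def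
  have hsin32 : Real.sin c = -1 := by
    have h : c = π + π/2 := by rw [hc_def]; ring
    rw [h, Real.sin_add, Real.sin_pi, Real.cos_pi, Real.sin_pi_div_two]; ring
  have hcos32 : Real.cos c = 0 := by
    have h : c = π + π/2 := by rw [hc_def]; ring
    rw [h, Real.cos_add, Real.sin_pi, Real.cos_pi, Real.cos_pi_div_two]; ring
  have hcp : c * (2/3) = π := by rw [hc_def]; ring
  -- Flow 1 = 0
  have h1 : Flow 1 = 0 := by
    rw [hFlow]
    have e1 : (∫ s in (0:ℝ)..(2/3), k 1 s * Real.sin (3*π/2*s)) = 0 := by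
      rw [intervalIntegral.integral_congr (g := fun _ => (0:ℝ))]
      · simp
      · intro s hs
        rw [Set.uIcc_of_le (by norm_num)] at hs
        simp only [hk]
        rw [if_neg (by linarith [hs.2] : ¬ (1:ℝ) ≤ s)]
        simp
    have e2 : (∫ s in (2/3:ℝ)..1, k 1 s * Real.sin (3*π/2*s)) = 0 := by
      rw [intervalIntegral.integral_congr (g := fun _ => (0:ℝ))]
      · simp
      · intro s hs
        rw [Set.uIcc_of_le (by norm_num)] at hs
        simp only [hk]
        split_ifs with h
        · have : s = 1 := le_antisymm hs.2 h
          simp [this]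
        · simp
    rw [e1, e2]; ring
  -- First integral at t = 2/3
  have I1 : (∫ s in (0:ℝ)..(2/3), k (2/3) s * Real.sin (3*π/2*s)) = 4 / (27*π) := by
    rw [intervalIntegral.integral_congr (g := fun s => s/3 * Real.sin (c*s))]
    · have key : ∀ s ∈ Set.uIcc (0:ℝ) (2/3),
        HasDerivAt (fun s => (Real.sin (c*s)/c^2 - s * Real.cos (c*s)/c)/3)
          (s/3 * Real.sin (c*s)) s := by
        intro s _
        have hid : HasDerivAt (fun s : ℝ => c * s) c s := by
          simpa using (hasDerivAt_id s).const_mul c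
        have hsin : HasDerivAt (fun s => Real.sin (c*s)) (Real.cos (c*s) * c) s :=
          (Real.hasDerivAt_sin _).comp s hid
        have hcos : HasDerivAt (fun s => Real.cos (c*s)) (-Real.sin (c*s) * c) s :=
          (Real.hasDerivAt_cos _).comp s hid
        have h := (((hsin.div_const (c^2)).sub
          (((hasDerivAt_id' s).mul hcos).div_const c)).div_const 3)
        refine h.congr_deriv ?_
        have hc2 : c^2 ≠ 0 := pow_ne_zero 2 hc
        field_simp
        ring
      rw [intervalIntegral.integral_eq_sub_of_hasDerivAt key
        (((continuous_id.div_const 3).mul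
          (Real.continuous_sin.comp (continuous_const.mul continuous_id))).intervalIntegrable _ _)]
      rw [show c * (2/3) = π from hcp]
      simp only [mul_zero, Real.sin_zero, Real.cos_zero, Real.sin_pi, Real.cos_pi]
      rw [hc_def]
      field_simp
      ring
    · intro s hs
      rw [Set.uIcc_of_le (by norm_num)] at hs
      simp only [hk]
      split_ifs with h
      · have : s = 2/3 := le_antisymm hs.2 h
        rw [this]; norm_num; rw [hc_def]
      · push_neg at h
        rw [hc_def]; ring_nf
  -- Second integral at t = 2/3
  have I2 : (∫ s in (2/3:ℝ)..1, k (2/3) s * Real.sin (3*π/2*s)) = (8 - 4*π) / (27*π^2) := by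
    rw [intervalIntegral.integral_congr (g := fun s => 2/3 * (1-s) * Real.sin (c*s))]
    · have key : ∀ s ∈ Set.uIcc (2/3:ℝ) 1,
        HasDerivAt (fun s => 2/3 * (-((1-s) * Real.cos (c*s))/c - Real.sin (c*s)/c^2))
          (2/3 * (1-s) * Real.sin (c*s)) s := by
        intro s _
        have hid : HasDerivAt (fun s : ℝ => c * s) c s := by
          simpa using (hasDerivAt_id s).const_mul c
        have hsin : HasDerivAt (fun s => Real.sin (c*s)) (Real.cos (c*s) * c) s :=
          (Real.hasDerivAt_sin _).comp s hid
        have hcos : HasDerivAt (fun s => Real.cos (c*s)) (-Real.sin (c*s) * c) s :=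
          (Real.hasDerivAt_cos _).comp s hid
        have hone : HasDerivAt (fun s : ℝ => 1 - s) (-1) s := by
          simpa using (hasDerivAt_id' s).const_sub (1:ℝ)
        have h := ((((((hone.mul hcos).neg).div_const c).sub
          (hsin.div_const (c^2)))).const_mul (2/3 : ℝ))
        refine h.congr_deriv ?_
        have hc2 : c^2 ≠ 0 := pow_ne_zero 2 hc
        field_simp
        ring
      rw [intervalIntegral.integral_eq_sub_of_hasDerivAt key
        (((continuous_const.mul (continuous_const.sub continuous_id)).mul
          (Real.continuous_sin.comp (continuous_const.mul continuous_id))).intervalIntegrable _ _)]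
      rw [show c * (2/3) = π from hcp]
      simp only [mul_one, Real.sin_pi, Real.cos_pi]
      rw [hsin32, hcos32]
      rw [hc_def]
      field_simp
      ring
    · intro s hs
      rw [Set.uIcc_of_le (by norm_num)] at hs
      simp only [hk]
      rw [if_pos hs.1]
  -- Flow (2/3)
  have h2 : Flow (2/3) = 4 / (27 * π) * Real.exp (-(2*ρ)) +
      (8 - 4 * π) / (27 * π ^ 2) * Real.exp (2*ρ) := by
    rw [hFlow, I1, I2]; ring
  refine ⟨h1, h2, ?_⟩
  rw [h2]
  set u := Real.exp (2*ρ) with hu_def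
  have hu : 0 < u := Real.exp_pos _
  have hinv : Real.exp (-(2*ρ)) = u⁻¹ := by rw [Real.exp_neg]
  have hu2 : u^2 = Real.exp (4*ρ) := by
    rw [hu_def, pow_two, ← Real.exp_add]; ring_nf
  have hfrac : (0:ℝ) < π / (π - 2) := by
    apply div_pos hπ; linarith
  have hlog : (ρ < 1/4 * Real.log (π / (π - 2))) ↔ u^2 < π / (π - 2) := by
    rw [hu2, ← Real.lt_log_iff_exp_lt hfrac]
    constructor <;> intro h <;> linarith
  rw [hlog, hinv, lt_div_iff₀ (by linarith : (0:ℝ) < π - 2)]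
  have e : 4/(27*π) + (8-4*π)/(27*π^2)*u^2 = (4*π + (8-4*π)*u^2)/(27*π^2) := by
    field_simp
  constructor
  · intro h
    have h' := mul_pos h hu
    have h'' : 0 < 4/(27*π) + (8-4*π)/(27*π^2) * u^2 := by
      have heq : (4 / (27 * π) * u⁻¹ + (8 - 4 * π) / (27 * π ^ 2) * u) * u
          = 4/(27*π) + (8-4*π)/(27*π^2) * u^2 := by
        field_simp
      rw [heq] at h'; linarith
    rw [e] at h''
    have h3 : 0 < 4*π + (8-4*π)*u^2 :=
      (div_pos_iff.mp h'').resolve_right (fun hcase => absurd hcase.2 (not_lt.mpr (by positivity))) |>.1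
    nlinarith
  · intro h
    have h3 : 0 < 4*π + (8-4*π)*u^2 := by nlinarith
    have h'' : 0 < 4/(27*π) + (8-4*π)/(27*π^2) * u^2 := by
      rw [e]; exact div_pos h3 (by positivity)
    have hpos : 0 < (4/(27*π) + (8-4*π)/(27*π^2) * u^2) * u⁻¹ := mul_pos h'' (by positivity)
    have heq : (4/(27*π) + (8-4*π)/(27*π^2) * u^2) * u⁻¹
        = 4 / (27 * π) * u⁻¹ + (8 - 4 * π) / (27 * π ^ 2) * u := by
      field_simp
    rw [heq] at hpos; linarith
end

section
/- Let ρ > 0, let k be the Dirichlet Green's function k(t,s) = t(1−s) for t ≤ s and k(t,s) = s(1−t) for s ≤ t, and define F_low(t) := e^{−2ρ} ∫₀^{2/3} k(t,s) sin((3π/2)s) ds + e^{2ρ} ∫_{2/3}^{1} k(t,s) sin((3π/2)s) ds. If 0 < ρ < (1/4)·ln(4π/(π−2)), then, with t_ρ := (2/(3π))·arccos(e^{4ρ}·(π−2)/(3π) − 1/3), one has F_low(t_ρ) > 0 and F_low(t_ρ) = max_{t ∈ [0,1]} F_low(t). -/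
set_option maxHeartbeats 1000000

open MeasureTheory Set Real

lemma integral_linear_sin (c1 c2 A B : ℝ) :
    (∫ s in A..B, (c1 + c2*s) * Real.sin (3*π/2*s)) =
      ((-(c1 + c2*B) * Real.cos (3*π/2*B) + c2 * Real.sin (3*π/2*B) / (3*π/2)) -
       (-(c1 + c2*A) * Real.cos (3*π/2*A) + c2 * Real.sin (3*π/2*A) / (3*π/2))) / (3*π/2) := by
  have hπ : (π : ℝ) ≠ 0 := Real.pi_ne_zero
  have key : ∀ s ∈ Set.uIcc A B, HasDerivAt
      (fun s => (-(c1 + c2*s) * Real.cos (3*π/2*s) + c2 * Real.sin (3*π/2*s) / (3*π/2)) / (3*π/2))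
      ((c1 + c2*s) * Real.sin (3*π/2*s)) s := by
    intro s _
    have hc : HasDerivAt (fun s : ℝ => 3*π/2*s) (3*π/2) s := by
      simpa using (hasDerivAt_id s).const_mul (3*π/2)
    have hcos : HasDerivAt (fun s => Real.cos (3*π/2*s)) (-Real.sin (3*π/2*s) * (3*π/2)) s :=
      (Real.hasDerivAt_cos _).comp s hc
    have hsin : HasDerivAt (fun s => Real.sin (3*π/2*s)) (Real.cos (3*π/2*s) * (3*π/2)) s :=
      (Real.hasDerivAt_sin _).comp s hc
    have hlin : HasDerivAt (fun s : ℝ => -(c1 + c2*s)) (-c2) s := by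
      have h := (((hasDerivAt_id s).const_mul c2).const_add c1).neg
      rw [mul_one] at h
      exact h
    have h1 := ((hlin.mul hcos).add ((hsin.const_mul c2).div_const (3*π/2))).div_const (3*π/2)
    refine h1.congr_deriv ?_
    field_simp
    ring
  rw [intervalIntegral.integral_eq_sub_of_hasDerivAt key
    (Continuous.intervalIntegrable (by fun_prop) A B)]
  ring

lemma sin_tangent_le {θ φ : ℝ} (hθ1 : 0 ≤ θ) (hθ2 : θ ≤ π) (hφ1 : 0 ≤ φ) (hφ2 : φ ≤ π) :
    Real.sin φ ≤ Real.sin θ + Real.cos θ * (φ - θ) := by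
  rcases lt_trichotomy φ θ with h | h | h
  · obtain ⟨c, hc, hceq⟩ := exists_hasDerivAt_eq_slope Real.sin Real.cos h
      Real.continuous_sin.continuousOn (fun x _ => Real.hasDerivAt_sin x)
    have hcθ : Real.cos θ ≤ Real.cos c :=
      (Real.strictAntiOn_cos ⟨le_trans hφ1 hc.1.le, le_trans hc.2.le hθ2⟩
        ⟨hθ1, hθ2⟩ hc.2).le
    have h2 : Real.cos c * (θ - φ) = Real.sin θ - Real.sin φ := by
      rw [hceq, div_mul_cancel₀ _ (sub_ne_zero.2 (ne_of_gt h))]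
    nlinarith [mul_le_mul_of_nonneg_right hcθ (by linarith : (0:ℝ) ≤ θ - φ)]
  · simp [h]
  · obtain ⟨c, hc, hceq⟩ := exists_hasDerivAt_eq_slope Real.sin Real.cos h
      Real.continuous_sin.continuousOn (fun x _ => Real.hasDerivAt_sin x)
    have hcθ : Real.cos c ≤ Real.cos θ :=
      (Real.strictAntiOn_cos ⟨hθ1, hθ2⟩
        ⟨le_trans hθ1 hc.1.le, le_trans hc.2.le hφ2⟩ hc.1).le
    have h2 : Real.cos c * (φ - θ) = Real.sin φ - Real.sin θ := by
      rw [hceq, div_mul_cancel₀ _ (sub_ne_zero.2 (ne_of_gt h))]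
    nlinarith [mul_le_mul_of_nonneg_right hcθ (by linarith : (0:ℝ) ≤ φ - θ)]

lemma sin_sub_mul_cos_pos {θ : ℝ} (h1 : 0 < θ) (h2 : θ < π) :
    0 < Real.sin θ - θ * Real.cos θ := by
  rcases le_or_gt θ (π/2) with h | h
  · rcases lt_or_eq_of_le h with h' | h'
    · have ht := Real.lt_tan h1 h'
      have hc : 0 < Real.cos θ := Real.cos_pos_of_mem_Ioo ⟨by linarith, h'⟩
      rw [Real.tan_eq_sin_div_cos, lt_div_iff₀ hc] at ht
      linarith
    · simp [h', Real.sin_pi_div_two, Real.cos_pi_div_two]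
  · have hs : 0 < Real.sin θ := Real.sin_pos_of_pos_of_lt_pi h1 h2
    have hc : Real.cos θ ≤ 0 := Real.cos_nonpos_of_pi_div_two_le_of_le h.le (by linarith)
    nlinarith

lemma computeI1_low (t : ℝ) (h0 : 0 ≤ t) (h1 : t ≤ 2/3) :
    (∫ s in (0:ℝ)..(2/3), min (t*(1-s)) (s*(1-t)) * Real.sin (3*π/2*s)) =
      (Real.sin (3*π/2*t) + π/2*t) / (3*π/2)^2 := by
  have hπ : (π : ℝ) ≠ 0 := Real.pi_ne_zero
  have hint : ∀ A B : ℝ, IntervalIntegrable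
      (fun s : ℝ => min (t*(1-s)) (s*(1-t)) * Real.sin (3*π/2*s)) volume A B :=
    fun A B => Continuous.intervalIntegrable (by fun_prop) A B
  rw [← intervalIntegral.integral_add_adjacent_intervals (hint 0 t) (hint t (2/3))]
  have e1 : (∫ s in (0:ℝ)..t, min (t*(1-s)) (s*(1-t)) * Real.sin (3*π/2*s))
      = ∫ s in (0:ℝ)..t, (0 + (1-t)*s) * Real.sin (3*π/2*s) := by
    apply intervalIntegral.integral_congr
    intro s hs
    rw [Set.uIcc_of_le h0] at hs
    have h2 : s ≤ t := hs.2
    dsimp only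
    rw [min_eq_right (by nlinarith)]
    ring
  have e2 : (∫ s in t..(2/3:ℝ), min (t*(1-s)) (s*(1-t)) * Real.sin (3*π/2*s))
      = ∫ s in t..(2/3:ℝ), (t + (-t)*s) * Real.sin (3*π/2*s) := by
    apply intervalIntegral.integral_congr
    intro s hs
    rw [Set.uIcc_of_le h1] at hs
    have h2 : t ≤ s := hs.1
    dsimp only
    rw [min_eq_left (by nlinarith)]
    ring
  rw [e1, e2, integral_linear_sin, integral_linear_sin]
  have r1 : 3*π/2*(2/3 : ℝ) = π := by ring
  have r2 : 3*π/2*(0 : ℝ) = 0 := by ring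
  rw [r1, r2, Real.cos_pi, Real.sin_pi, Real.cos_zero, Real.sin_zero]
  field_simp
  ring

lemma computeI2_low (t : ℝ) (h1 : t ≤ 2/3) :
    (∫ s in (2/3:ℝ)..1, min (t*(1-s)) (s*(1-t)) * Real.sin (3*π/2*s)) =
      t * (1 - π/2) / (3*π/2)^2 := by
  have hπ : (π : ℝ) ≠ 0 := Real.pi_ne_zero
  have e1 : (∫ s in (2/3:ℝ)..1, min (t*(1-s)) (s*(1-t)) * Real.sin (3*π/2*s))
      = ∫ s in (2/3:ℝ)..1, (t + (-t)*s) * Real.sin (3*π/2*s) := by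
    apply intervalIntegral.integral_congr
    intro s hs
    rw [Set.uIcc_of_le (by norm_num)] at hs
    have h2 : t ≤ s := le_trans h1 hs.1
    dsimp only
    rw [min_eq_left (by nlinarith)]
    ring
  rw [e1, integral_linear_sin]
  have r1 : 3*π/2*(2/3 : ℝ) = π := by ring
  have r2 : 3*π/2*(1 : ℝ) = π + π/2 := by ring
  rw [r1, r2, Real.cos_pi, Real.sin_pi, Real.cos_add, Real.sin_add, Real.cos_pi_div_two,
    Real.sin_pi_div_two, Real.cos_pi, Real.sin_pi]
  field_simp
  ring

lemma computeI1_high (t : ℝ) (h0 : 2/3 ≤ t) :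
    (∫ s in (0:ℝ)..(2/3), min (t*(1-s)) (s*(1-t)) * Real.sin (3*π/2*s)) =
      π * (1-t) / (3*π/2)^2 := by
  have hπ : (π : ℝ) ≠ 0 := Real.pi_ne_zero
  have e1 : (∫ s in (0:ℝ)..(2/3), min (t*(1-s)) (s*(1-t)) * Real.sin (3*π/2*s))
      = ∫ s in (0:ℝ)..(2/3), (0 + (1-t)*s) * Real.sin (3*π/2*s) := by
    apply intervalIntegral.integral_congr
    intro s hs
    rw [Set.uIcc_of_le (by norm_num)] at hs
    have h2 : s ≤ t := le_trans hs.2 h0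
    dsimp only
    rw [min_eq_right (by nlinarith)]
    ring
  rw [e1, integral_linear_sin]
  have r1 : 3*π/2*(2/3 : ℝ) = π := by ring
  have r2 : 3*π/2*(0 : ℝ) = 0 := by ring
  rw [r1, r2, Real.cos_pi, Real.sin_pi, Real.cos_zero, Real.sin_zero]
  field_simp
  ring

lemma computeI2_high (t : ℝ) (h0 : 2/3 ≤ t) (h1 : t ≤ 1) :
    (∫ s in (2/3:ℝ)..1, min (t*(1-s)) (s*(1-t)) * Real.sin (3*π/2*s)) =
      (Real.sin (3*π/2*t) + (π+1)*t - π) / (3*π/2)^2 := by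
  have hπ : (π : ℝ) ≠ 0 := Real.pi_ne_zero
  have hint : ∀ A B : ℝ, IntervalIntegrable
      (fun s : ℝ => min (t*(1-s)) (s*(1-t)) * Real.sin (3*π/2*s)) volume A B :=
    fun A B => Continuous.intervalIntegrable (by fun_prop) A B
  rw [← intervalIntegral.integral_add_adjacent_intervals (hint (2/3) t) (hint t 1)]
  have e1 : (∫ s in (2/3:ℝ)..t, min (t*(1-s)) (s*(1-t)) * Real.sin (3*π/2*s))
      = ∫ s in (2/3:ℝ)..t, (0 + (1-t)*s) * Real.sin (3*π/2*s) := by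
    apply intervalIntegral.integral_congr
    intro s hs
    rw [Set.uIcc_of_le h0] at hs
    have h2 : s ≤ t := hs.2
    dsimp only
    rw [min_eq_right (by nlinarith)]
    ring
  have e2 : (∫ s in t..(1:ℝ), min (t*(1-s)) (s*(1-t)) * Real.sin (3*π/2*s))
      = ∫ s in t..(1:ℝ), (t + (-t)*s) * Real.sin (3*π/2*s) := by
    apply intervalIntegral.integral_congr
    intro s hs
    rw [Set.uIcc_of_le h1] at hs
    have h2 : t ≤ s := hs.1
    dsimp only
    rw [min_eq_left (by nlinarith)]
    ring
  rw [e1, e2, integral_linear_sin, integral_linear_sin]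
  have r1 : 3*π/2*(2/3 : ℝ) = π := by ring
  have r2 : 3*π/2*(1 : ℝ) = π + π/2 := by ring
  rw [r1, r2, Real.cos_pi, Real.sin_pi, Real.cos_add, Real.sin_add, Real.cos_pi_div_two,
    Real.sin_pi_div_two, Real.cos_pi, Real.sin_pi]
  field_simp
  ring

/-- For the Dirichlet Green's function: if 0 < rho < (1/4) ln(4 pi/(pi - 2)),
then F_low attains a positive maximum over [0,1] at
t_rho = (2/(3 pi)) arccos(exp(4 rho)(pi - 2)/(3 pi) - 1/3). -/
theorem dirichlet_Flow_maximum
    (ρ : ℝ) (hρ : 0 < ρ) (hρ' : ρ < 1/4 * Real.log (4 * π / (π - 2)))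
    (k : ℝ → ℝ → ℝ)
    (hk : ∀ t s : ℝ, k t s = if t ≤ s then t * (1 - s) else s * (1 - t))
    (Flow : ℝ → ℝ)
    (hFlow : ∀ t : ℝ, Flow t =
      Real.exp (-(2*ρ)) * (∫ s in (0:ℝ)..(2/3), k t s * Real.sin (3 * π / 2 * s)) +
      Real.exp (2*ρ) * ∫ s in (2/3:ℝ)..1, k t s * Real.sin (3 * π / 2 * s)) :
    0 < Flow (2 / (3 * π) * Real.arccos (Real.exp (4*ρ) * (π - 2) / (3 * π) - 1/3)) ∧
    (2 / (3 * π) * Real.arccos (Real.exp (4*ρ) * (π - 2) / (3 * π) - 1/3)) ∈ Set.Icc (0:ℝ) 1 ∧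
    ∀ t ∈ Set.Icc (0:ℝ) 1, Flow t ≤ Flow (2 / (3 * π) * Real.arccos (Real.exp (4*ρ) * (π - 2) / (3 * π) - 1/3)) := by
  have hπ : (π : ℝ) ≠ 0 := Real.pi_ne_zero
  have hπ3 : 3 < π := by
    have := Real.pi_gt_three
    linarith
  have hπpos : 0 < π := by linarith
  have hkK : k = fun t s => min (t*(1-s)) (s*(1-t)) := by
    funext t s
    rw [hk]
    rcases le_or_gt t s with h | h
    · rw [if_pos h, min_eq_left (by nlinarith)]
    · rw [if_neg (not_le.2 h), min_eq_right (by nlinarith)]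
  set a := Real.exp (-(2*ρ)) with hadef
  set b := Real.exp (2*ρ) with hbdef
  have hapos : 0 < a := Real.exp_pos _
  have hbpos : 0 < b := Real.exp_pos _
  have hb : b = a * Real.exp (4*ρ) := by
    rw [hadef, hbdef, ← Real.exp_add]
    congr 1
    ring
  set x := Real.exp (4*ρ) * (π - 2) / (3 * π) - 1/3 with hxdef
  set θ := Real.arccos x with hθdef
  -- bounds on x
  have hE1 : 1 < Real.exp (4*ρ) := by
    have := Real.exp_lt_exp.2 (show (0:ℝ) < 4*ρ by linarith)
    simpa using this
  have hE2 : Real.exp (4*ρ) < 4 * π / (π - 2) := by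
    have h1 : 4*ρ < Real.log (4 * π / (π - 2)) := by linarith
    have h2 := Real.exp_lt_exp.2 h1
    rwa [Real.exp_log (div_pos (by positivity) (by linarith))] at h2
  have hx1 : x < 1 := by
    rw [lt_div_iff₀ (by linarith : 0 < π - 2)] at hE2
    have h3 : Real.exp (4*ρ) * (π - 2) / (3 * π) < 4/3 := by
      rw [div_lt_iff₀ (by positivity)]
      nlinarith
    rw [hxdef]
    linarith
  have hxm1 : -1 < x := by
    have h4 : 0 < Real.exp (4*ρ) * (π - 2) / (3 * π) :=
      div_pos (mul_pos (Real.exp_pos _) (by linarith)) (by positivity)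
    rw [hxdef]
    linarith
  have hθpos : 0 < θ := Real.arccos_pos.2 hx1
  have hθπ : θ < π := by
    refine lt_of_le_of_ne (Real.arccos_le_pi x) fun he => ?_
    have := Real.arccos_eq_pi.1 he
    linarith
  have hcosθ : Real.cos θ = x := Real.cos_arccos hxm1.le hx1.le
  set T := 2 / (3 * π) * θ with hTdef
  have hT0 : 0 < T := by
    rw [hTdef]
    positivity
  have hT23 : T ≤ 2/3 := by
    rw [hTdef, div_mul_eq_mul_div, div_le_div_iff₀ (by positivity) (by norm_num)]
    nlinarith
  have hωT : 3*π/2*T = θ := by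
    rw [hTdef]
    field_simp
  -- c identity
  have hc : a*π/2 + b*(1-π/2) = -(a*(3*π/2)*x) := by
    rw [hb, hxdef]
    field_simp
    ring
  -- Flow formulas
  have FlowLow : ∀ u : ℝ, 0 ≤ u → u ≤ 2/3 → Flow u =
      (a * Real.sin (3*π/2*u) + (a*π/2 + b*(1-π/2)) * u) / (3*π/2)^2 := by
    intro u h0 h1
    rw [hFlow u]
    simp only [hkK]
    rw [computeI1_low u h0 h1, computeI2_low u h1]
    field_simp
    ring
  have FlowHigh : ∀ u : ℝ, 2/3 ≤ u → u ≤ 1 → Flow u =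
      (a * π * (1-u) + b * (Real.sin (3*π/2*u) + (π+1)*u - π)) / (3*π/2)^2 := by
    intro u h0 h1
    rw [hFlow u]
    simp only [hkK]
    rw [computeI1_high u h0, computeI2_high u h0 h1]
    field_simp
  set M := a * (Real.sin θ - θ * x) with hMdef
  have hFT : Flow T = M / (3*π/2)^2 := by
    rw [FlowLow T hT0.le hT23, hωT, hc, hMdef, hTdef]
    field_simp
    ring
  have hM0 : 0 < M := by
    rw [hMdef, ← hcosθ]
    exact mul_pos hapos (sin_sub_mul_cos_pos hθpos hθπ)
  -- low-range bound
  have lowle : ∀ u : ℝ, 0 ≤ u → u ≤ 2/3 →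
      a * Real.sin (3*π/2*u) + (a*π/2 + b*(1-π/2)) * u ≤ M := by
    intro u h0 h1
    have hφ1 : 0 ≤ 3*π/2*u := by positivity
    have hφ2 : 3*π/2*u ≤ π := by nlinarith
    have htan := sin_tangent_le hθpos.le hθπ.le hφ1 hφ2
    rw [hcosθ] at htan
    rw [hc, hMdef]
    nlinarith [mul_le_mul_of_nonneg_left htan hapos.le]
  have hM23 : (a*π - b*(π-2))/3 ≤ M := by
    have h := lowle (2/3) (by norm_num) (le_refl _)
    have r1 : 3*π/2*(2/3 : ℝ) = π := by ring
    rw [r1, Real.sin_pi] at h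
    calc (a*π - b*(π-2))/3 = a * 0 + (a*π/2 + b*(1-π/2)) * (2/3) := by ring
      _ ≤ M := h
  refine ⟨?_, ⟨hT0.le, by linarith⟩, ?_⟩
  · rw [hFT]
    positivity
  · intro t ht
    obtain ⟨ht0, ht1⟩ := ht
    rcases le_or_gt t (2/3) with h | h
    · rw [FlowLow t ht0 h, hFT]
      gcongr
      exact lowle t ht0 h
    · rw [FlowHigh t h.le ht1, hFT]
      gcongr
      -- Jordan inequality bound on sin
      have hψ1 : 0 ≤ 3*π/2*t - π := by nlinarith
      have hψ2 : 3*π/2*t - π ≤ π/2 := by nlinarith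
      have hJ0 := Real.mul_le_sin hψ1 hψ2
      have hsin : Real.sin (3*π/2*t) = -Real.sin (3*π/2*t - π) := by
        have e := Real.sin_add_pi (3*π/2*t - π)
        rw [sub_add_cancel] at e
        exact e
      have hJ : Real.sin (3*π/2*t) ≤ 2 - 3*t := by
        rw [hsin]
        have e2 : 2/π * (3*π/2*t - π) = 3*t - 2 := by
          field_simp
        have hJ0' : 3*t - 2 ≤ Real.sin (3*π/2*t - π) := by
          rw [← e2]; exact hJ0
        linarith
      have hJb := mul_le_mul_of_nonneg_left hJ hbpos.le
      rcases le_or_gt (a*π - b*(π-2)) 0 with hC | hC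
      · nlinarith [mul_nonpos_of_nonneg_of_nonpos (by linarith : (0:ℝ) ≤ 1 - t) hC]
      · nlinarith [mul_le_mul_of_nonneg_right (by linarith : 1 - t ≤ 1/3) hC.le]
end
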